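/- arXiv:2602.07981 — 10 statements merged into one kernel-verified Lean document; each statement's English description precedes it below -/
import Mathlib

section
/- For any two positive semi-definite n×n real matrices A and B, det(Id + A + B) ≤ det(Id + A) · det(Id + B). -/
open Matrix
open scoped MatrixOrder

section Aux

variable {n : ℕ}

/-- For a real PSD matrix `R`, `1 ≤ det (1 + R)`. -/
lemma aux_one_le_det_one_add {R : Matrix (Fin n) (Fin n) ℝ} (hR : R.PosSemidef) :
    1 ≤ (1 + R).det := by
  have hH := hR.1
  set U : Matrix (Fin n) (Fin n) ℝ := (hH.eigenvectorUnitary : Matrix (Fin n) (Fin n) ℝ)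
  have hU : U * star U = 1 := Matrix.mem_unitaryGroup_iff.mp hH.eigenvectorUnitary.2
  have hspec := hH.spectral_theorem
  set D : Matrix (Fin n) (Fin n) ℝ := 1 + diagonal (RCLike.ofReal ∘ hH.eigenvalues) with hDdef
  have key : (1 : Matrix (Fin n) (Fin n) ℝ) + R = U * D * star U := by
    rw [hDdef, Matrix.mul_add, Matrix.add_mul, Matrix.mul_one, hU]
    exact congrArg (1 + ·) (hspec.trans (Unitary.conjStarAlgAut_apply _ _))
  have hdetU : U.det * (star U).det = 1 := by
    rw [← Matrix.det_mul, hU, Matrix.det_one]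
  have hdet : (1 + R).det = D.det := by
    rw [key, Matrix.det_mul, Matrix.det_mul]
    calc U.det * D.det * (star U).det = U.det * (star U).det * D.det := by ring
      _ = D.det := by rw [hdetU, one_mul]
  rw [hdet]
  have hD : D = diagonal (fun i => 1 + hH.eigenvalues i) := by
    rw [hDdef, ← Matrix.diagonal_one, Matrix.diagonal_add]
    rfl
  rw [hD, Matrix.det_diagonal]
  calc (1:ℝ) = ∏ _i : Fin n, (1:ℝ) := by simp
    _ ≤ ∏ i, (1 + hH.eigenvalues i) :=
        Finset.prod_le_prod (fun i _ => zero_le_one) (fun i _ => by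
          have h0 : 0 ≤ hH.eigenvalues i := hR.eigenvalues_nonneg i
          linarith)

/-- For a real PosDef `P` and PSD `Q`, `det P ≤ det (P + Q)`. -/
lemma aux_det_le_det_add {P Q : Matrix (Fin n) (Fin n) ℝ}
    (hP : P.PosDef) (hQ : Q.PosSemidef) : P.det ≤ (P + Q).det := by
  have hPinv : P⁻¹.PosSemidef := hP.inv.posSemidef
  set N := CFC.sqrt P⁻¹ with hNdef
  have hN : N.PosSemidef := Matrix.nonneg_iff_posSemidef.mp (CFC.sqrt_nonneg _)
  have hN2 : N * N = P⁻¹ := CFC.sqrt_mul_sqrt_self _ hPinv.nonneg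
  have hPunit : IsUnit P.det := isUnit_iff_ne_zero.mpr hP.det_pos.ne'
  have hfact : P + Q = P * (1 + P⁻¹ * Q) := by
    rw [Matrix.mul_add, Matrix.mul_one, ← Matrix.mul_assoc, Matrix.mul_nonsing_inv _ hPunit,
      Matrix.one_mul]
  have hNQN : (N * Q * N).PosSemidef := by
    have := hQ.mul_mul_conjTranspose_same N
    rwa [hN.1.eq] at this
  have hdet : (1 + P⁻¹ * Q).det = (1 + N * Q * N).det := by
    rw [← hN2, Matrix.mul_assoc, Matrix.det_one_add_mul_comm, Matrix.mul_assoc]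
  have h1 : 1 ≤ (1 + N * Q * N).det := aux_one_le_det_one_add hNQN
  calc P.det = P.det * 1 := (mul_one _).symm
    _ ≤ P.det * (1 + N * Q * N).det := by
        exact mul_le_mul_of_nonneg_left h1 hP.det_pos.le
    _ = (P + Q).det := by rw [hfact, Matrix.det_mul, hdet]

end Aux

/-- For any two positive semi-definite `n × n` real matrices `A` and `B`,
`det (Id + A + B) ≤ det (Id + A) * det (Id + B)`. -/
theorem det_one_add_add_le_det_mul_det {n : ℕ} (A B : Matrix (Fin n) (Fin n) ℝ)
    (hA : A.PosSemidef) (hB : B.PosSemidef) :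
    (1 + A + B).det ≤ (1 + A).det * (1 + B).det := by
  set C : Matrix (Fin n) (Fin n) ℝ := 1 + A with hCdef
  have hC : C.PosDef := Matrix.PosDef.add_posSemidef Matrix.PosDef.one hA
  have hCunit : IsUnit C.det := isUnit_iff_ne_zero.mpr hC.det_pos.ne'
  have hCinv : C⁻¹.PosSemidef := hC.inv.posSemidef
  set N := CFC.sqrt C⁻¹ with hNdef
  have hN : N.PosSemidef := Matrix.nonneg_iff_posSemidef.mp (CFC.sqrt_nonneg _)
  have hN2 : N * N = C⁻¹ := CFC.sqrt_mul_sqrt_self _ hCinv.nonneg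
  set S := CFC.sqrt B with hSdef
  have hS : S.PosSemidef := Matrix.nonneg_iff_posSemidef.mp (CFC.sqrt_nonneg _)
  have hS2 : S * S = B := CFC.sqrt_mul_sqrt_self _ hB.nonneg
  -- N commutes with C, so N * C * N = 1
  have hCCinv : C * C⁻¹ = 1 := Matrix.mul_nonsing_inv _ hCunit
  have hCinvC : C⁻¹ * C = 1 := Matrix.nonsing_inv_mul _ hCunit
  have hNCinv : N * C⁻¹ = C⁻¹ * N := by rw [← hN2, Matrix.mul_assoc]
  have hNC : C * N = N * C := by
    calc C * N = C * N * (C⁻¹ * C) := by rw [hCinvC, Matrix.mul_one]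
      _ = C * (N * C⁻¹) * C := by simp only [Matrix.mul_assoc]
      _ = C * (C⁻¹ * N) * C := by rw [hNCinv]
      _ = N * C := by rw [← Matrix.mul_assoc, hCCinv, Matrix.one_mul]
  have hNCN : N * C * N = 1 := by
    rw [← hNC, Matrix.mul_assoc, hN2, hCCinv]
  -- 1 - C⁻¹ = N * A * N, hence PSD
  have hNAN : (N * A * N).PosSemidef := by
    have := hA.mul_mul_conjTranspose_same N
    rwa [hN.1.eq] at this
  have hone_sub : N * A * N = 1 - C⁻¹ := by
    have : N * A * N = N * C * N - N * N := by
      rw [hCdef]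
      noncomm_ring
    rw [this, hNCN, hN2]
  -- det (1 + A + B) = det C * det (1 + S * C⁻¹ * S)
  have hfact : 1 + A + B = C * (1 + C⁻¹ * B) := by
    rw [Matrix.mul_add, Matrix.mul_one, ← Matrix.mul_assoc, hCCinv, Matrix.one_mul]
  have hdet1 : (1 + C⁻¹ * B).det = (1 + S * C⁻¹ * S).det := by
    rw [← hN2, ← hS2]
    calc (1 + N * N * (S * S)).det = (1 + N * (N * (S * S))).det := by
          rw [Matrix.mul_assoc]
      _ = (1 + N * (S * S) * N).det := by rw [Matrix.det_one_add_mul_comm]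
      _ = (1 + (N * S) * (S * N)).det := by
          simp only [Matrix.mul_assoc]
      _ = (1 + (S * N) * (N * S)).det := Matrix.det_one_add_mul_comm _ _
      _ = (1 + S * (N * N) * S).det := by simp only [Matrix.mul_assoc]
  -- S * C⁻¹ * S is PSD
  have hSCS : (S * C⁻¹ * S).PosSemidef := by
    have := hCinv.mul_mul_conjTranspose_same S
    rwa [hS.1.eq] at this
  -- 1 + B = (1 + S * C⁻¹ * S) + S * (N * A * N) * S
  have hSNANS : (S * (N * A * N) * S).PosSemidef := by
    have := hNAN.mul_mul_conjTranspose_same S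
    rwa [hS.1.eq] at this
  have hsplit : (1 : Matrix (Fin n) (Fin n) ℝ) + B
      = (1 + S * C⁻¹ * S) + S * (N * A * N) * S := by
    rw [hone_sub, ← hS2]
    noncomm_ring
  have hmono : (1 + S * C⁻¹ * S).det ≤ (1 + B).det := by
    rw [hsplit]
    exact aux_det_le_det_add (Matrix.PosDef.add_posSemidef Matrix.PosDef.one hSCS) hSNANS
  calc (1 + A + B).det = C.det * (1 + S * C⁻¹ * S).det := by
        rw [hfact, Matrix.det_mul, hdet1]
    _ ≤ C.det * (1 + B).det := mul_le_mul_of_nonneg_left hmono hC.det_pos.le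
    _ = (1 + A).det * (1 + B).det := rfl
end

section
/- For any positive semi-definite n×n real matrices 𝒜, ℬ, 𝒞, one has det(𝒞) · det(𝒞 + 𝒜 + ℬ) ≤ det(𝒞 + 𝒜) · det(𝒞 + ℬ). -/
open Matrix


lemma dot_inv_mono {n : ℕ} {C D : Matrix (Fin n) (Fin n) ℝ} (hC : C.PosDef) (hD : D.PosDef)
    (h : (D - C).PosSemidef) (v : Fin n → ℝ) :
    v ⬝ᵥ D⁻¹ *ᵥ v ≤ v ⬝ᵥ C⁻¹ *ᵥ v := by
  set x := D⁻¹ *ᵥ v with hx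
  set y := C⁻¹ *ᵥ v with hy
  have hCs : Cᵀ = C := hC.isHermitian
  have hDx : D *ᵥ x = v := by
    rw [hx, mulVec_mulVec, mul_nonsing_inv _ hD.det_pos.ne'.isUnit, one_mulVec]
  have hCy : C *ᵥ y = v := by
    rw [hy, mulVec_mulVec, mul_nonsing_inv _ hC.det_pos.ne'.isUnit, one_mulVec]
  have hsym : ∀ a b : Fin n → ℝ, a ⬝ᵥ C *ᵥ b = b ⬝ᵥ C *ᵥ a := by
    intro a b
    rw [dotProduct_mulVec]
    nth_rewrite 1 [← hCs]
    rw [vecMul_transpose, dotProduct_comm]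
  have h1 : (0:ℝ) ≤ (x - y) ⬝ᵥ C *ᵥ (x - y) := by
    have := hC.posSemidef.dotProduct_mulVec_nonneg (x - y); simpa using this
  have h2 : (0:ℝ) ≤ x ⬝ᵥ (D - C) *ᵥ x := by
    have := h.dotProduct_mulVec_nonneg x; simpa using this
  have e1 : (x - y) ⬝ᵥ C *ᵥ (x - y) = x ⬝ᵥ C *ᵥ x - 2 * (x ⬝ᵥ v) + y ⬝ᵥ v := by
    rw [mulVec_sub, dotProduct_sub, sub_dotProduct, sub_dotProduct, hCy,
      hsym y x, hCy]
    ring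
  have e2 : x ⬝ᵥ (D - C) *ᵥ x = x ⬝ᵥ v - x ⬝ᵥ C *ᵥ x := by
    rw [sub_mulVec, dotProduct_sub, hDx]
  rw [e1] at h1; rw [e2] at h2
  rw [dotProduct_comm v x, dotProduct_comm v y]
  linarith


lemma det_add_vmv {n : ℕ} {C : Matrix (Fin n) (Fin n) ℝ} (hC : C.PosDef) (v : Fin n → ℝ) :
    (C + vecMulVec v v).det = C.det * (1 + v ⬝ᵥ C⁻¹ *ᵥ v) := by
  rw [vecMulVec_eq Unit v v, det_add_replicateCol_mul_replicateRow hC.det_pos.ne'.isUnit]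
  congr 1
  rw [← replicateRow_vecMul, det_unique]
  simp [dotProduct_mulVec]

lemma vmv_posSemidef {n : ℕ} (v : Fin n → ℝ) : (vecMulVec v v).PosSemidef := by
  have := posSemidef_conjTranspose_mul_self (replicateRow Unit v)
  have e : (replicateRow Unit v)ᴴ * replicateRow Unit v = vecMulVec v v := by
    ext i j
    simp [vecMulVec, Matrix.mul_apply, replicateRow, conjTranspose_apply]
  rwa [e] at this


lemma key_step {n : ℕ} {C A : Matrix (Fin n) (Fin n) ℝ} (hC : C.PosDef) (hA : A.PosSemidef)
    (v : Fin n → ℝ) :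
    C.det * (C + A + vecMulVec v v).det ≤ (C + vecMulVec v v).det * (C + A).det := by
  have hD : (C + A).PosDef := hC.add_posSemidef hA
  rw [det_add_vmv hC v, det_add_vmv hD v]
  have hmono := dot_inv_mono hC hD (by simpa using hA) v
  have h1 : (0:ℝ) ≤ 1 + v ⬝ᵥ (C + A)⁻¹ *ᵥ v := by
    have : (0:ℝ) ≤ v ⬝ᵥ (C + A)⁻¹ *ᵥ v := by
      have := hD.inv.posSemidef.dotProduct_mulVec_nonneg v; simpa using this
    linarith
  have := hC.det_pos
  have := hD.det_pos
  nlinarith [mul_le_mul_of_nonneg_left hmono (mul_nonneg this.le hD.det_pos.le)]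

lemma sum_step {n m : ℕ} {C A : Matrix (Fin n) (Fin n) ℝ} (hC : C.PosDef) (hA : A.PosSemidef)
    (s : Finset (Fin m)) (v : Fin m → Fin n → ℝ) :
    C.det * (C + A + ∑ i ∈ s, vecMulVec (v i) (v i)).det ≤
      (C + ∑ i ∈ s, vecMulVec (v i) (v i)).det * (C + A).det := by
  induction s using Finset.induction_on with
  | empty => simp
  | @insert a s ha IH =>
    rw [Finset.sum_insert ha]
    set S := ∑ i ∈ s, vecMulVec (v i) (v i) with hS
    have hSpsd : S.PosSemidef :=
      Finset.sum_induction _ _ (fun a b ha hb => ha.add hb) Matrix.PosSemidef.zero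
        (fun i _ => vmv_posSemidef (v i))
    have hCS : (C + S).PosDef := hC.add_posSemidef hSpsd
    have key := key_step hCS hA (v a)
    have e1 : C + S + A + vecMulVec (v a) (v a) = C + A + (vecMulVec (v a) (v a) + S) := by abel
    have e2 : C + S + vecMulVec (v a) (v a) = C + (vecMulVec (v a) (v a) + S) := by abel
    have e3 : C + S + A = C + A + S := by abel
    rw [e1, e2, e3] at key
    have dC := hC.det_pos
    have dCS := hCS.det_pos
    have dCA := (hC.add_posSemidef hA).det_pos
    have dCAS := ((hC.add_posSemidef hA).add_posSemidef hSpsd).det_pos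
    have dCSv := (hCS.add_posSemidef (vmv_posSemidef (v a))).det_pos
    rw [e2] at dCSv
    nlinarith [mul_le_mul_of_nonneg_left key dC.le, mul_le_mul_of_nonneg_left IH dCSv.le]


section
open scoped MatrixOrder

lemma posdef_version {n : ℕ} {A B C : Matrix (Fin n) (Fin n) ℝ} (hC : C.PosDef)
    (hA : A.PosSemidef) (hB : B.PosSemidef) :
    C.det * (C + A + B).det ≤ (C + A).det * (C + B).det := by
  have hh := (CFC.sqrt_nonneg B).posSemidef.isHermitian
  have hMsym : ∀ i j, CFC.sqrt B j i = CFC.sqrt B i j := by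
    intro i j
    nth_rewrite 2 [← hh]
    simp [conjTranspose_apply]
  have hBdec : B = ∑ i : Fin n, vecMulVec (fun j => CFC.sqrt B i j) (fun j => CFC.sqrt B i j) := by
    conv_lhs => rw [← CFC.sqrt_mul_sqrt_self B hB.nonneg]
    ext j k
    simp only [Matrix.mul_apply, Matrix.sum_apply, vecMulVec_apply]
    exact Finset.sum_congr rfl fun i _ => by rw [hMsym j i]
  rw [hBdec, mul_comm ((C + A).det)]
  exact sum_step hC hA Finset.univ _

end


/-- For positive semi-definite matrices `𝒜, ℬ, 𝒞`,
`det 𝒞 * det (𝒞 + 𝒜 + ℬ) ≤ det (𝒞 + 𝒜) * det (𝒞 + ℬ)`. -/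
theorem det_mul_det_add_add_le {n : ℕ} (𝒜 ℬ 𝒞 : Matrix (Fin n) (Fin n) ℝ)
    (hA : 𝒜.PosSemidef) (hB : ℬ.PosSemidef) (hC : 𝒞.PosSemidef) :
    𝒞.det * (𝒞 + 𝒜 + ℬ).det ≤ (𝒞 + 𝒜).det * (𝒞 + ℬ).det := by
  have hcont : ∀ M : Matrix (Fin n) (Fin n) ℝ, Continuous fun ε : ℝ => (M + ε • 1).det :=
    fun M => (continuous_const.add (continuous_id.smul continuous_const)).matrix_det
  set F : ℝ → ℝ := fun ε => (𝒞 + ε • 1).det * ((𝒞 + 𝒜 + ℬ) + ε • 1).det with hF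
  set G : ℝ → ℝ := fun ε => ((𝒞 + 𝒜) + ε • 1).det * ((𝒞 + ℬ) + ε • 1).det with hG
  have hFc : Continuous F := (hcont 𝒞).mul (hcont _)
  have hGc : Continuous G := (hcont _).mul (hcont _)
  have hle : ∀ ε ∈ Set.Ioi (0:ℝ), F ε ≤ G ε := by
    intro ε hε
    have hdiag : (ε • (1 : Matrix (Fin n) (Fin n) ℝ)) = diagonal (fun _ => ε) := by
      ext i j
      by_cases h : i = j <;> simp [Matrix.one_apply, h]
    have hP : (𝒞 + ε • 1).PosDef := by
      rw [hdiag]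
      exact Matrix.PosDef.posSemidef_add hC (Matrix.PosDef.diagonal fun _ => hε)
    have := posdef_version hP hA hB
    simp only [hF, hG]
    calc (𝒞 + ε • 1).det * ((𝒞 + 𝒜 + ℬ) + ε • 1).det
        = (𝒞 + ε • 1).det * ((𝒞 + ε • 1) + 𝒜 + ℬ).det := by ring_nf; rw [show 𝒞 + 𝒜 + ℬ + ε • 1 = 𝒞 + ε • 1 + 𝒜 + ℬ by abel]
      _ ≤ ((𝒞 + ε • 1) + 𝒜).det * ((𝒞 + ε • 1) + ℬ).det := this
      _ = ((𝒞 + 𝒜) + ε • 1).det * ((𝒞 + ℬ) + ε • 1).det := by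
          rw [show 𝒞 + ε • 1 + 𝒜 = 𝒞 + 𝒜 + ε • 1 by abel, show 𝒞 + ε • 1 + ℬ = 𝒞 + ℬ + ε • 1 by abel]
  have hF0 : F 0 = 𝒞.det * (𝒞 + 𝒜 + ℬ).det := by simp [hF]
  have hG0 : G 0 = (𝒞 + 𝒜).det * (𝒞 + ℬ).det := by simp [hG]
  rw [← hF0, ← hG0]
  have hFt : Filter.Tendsto F (nhdsWithin 0 (Set.Ioi 0)) (nhds (F 0)) :=
    (hFc.continuousAt).tendsto.mono_left nhdsWithin_le_nhds
  have hGt : Filter.Tendsto G (nhdsWithin 0 (Set.Ioi 0)) (nhds (G 0)) :=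
    (hGc.continuousAt).tendsto.mono_left nhdsWithin_le_nhds
  exact le_of_tendsto_of_tendsto hFt hGt (Filter.eventually_iff_exists_mem.mpr
    ⟨Set.Ioi 0, self_mem_nhdsWithin, hle⟩)
end

section
/- For all positive semi-definite n×n real matrices A and B, 1/(1+‖A−B‖_op)^n ≤ det(Id + A)/det(Id + B) ≤ (1+‖A−B‖_op)^n. -/
open Matrix

private lemma det_one_add_eq {n : ℕ} {R : Matrix (Fin n) (Fin n) ℝ} (hR : R.IsHermitian) :
    (1 + R).det = ∏ i, (1 + hR.eigenvalues i) := by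
  set U : Matrix (Fin n) (Fin n) ℝ := (hR.eigenvectorUnitary : Matrix (Fin n) (Fin n) ℝ)
  have hU1 : U * star U = 1 := Unitary.mul_star_self_of_mem hR.eigenvectorUnitary.2
  have hUdet : U.det * (star U).det = 1 := by
    rw [← det_mul, hU1, det_one]
  have hspec := hR.spectral_theorem
  have key : 1 + R = U * (1 + diagonal (RCLike.ofReal ∘ hR.eigenvalues)) * star U := by
    rw [Unitary.conjStarAlgAut_apply] at hspec
    rw [mul_add, add_mul, mul_one, hU1, ← hspec]
  rw [key, det_mul, det_mul]
  have : (1 + diagonal (RCLike.ofReal ∘ hR.eigenvalues) : Matrix (Fin n) (Fin n) ℝ) =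
      diagonal (fun i => 1 + hR.eigenvalues i) := by
    rw [← diagonal_one, diagonal_add]
    rfl
  rw [this, det_diagonal]
  calc U.det * (∏ i, (1 + hR.eigenvalues i)) * (star U).det
      = (U.det * (star U).det) * ∏ i, (1 + hR.eigenvalues i) := by ring
    _ = ∏ i, (1 + hR.eigenvalues i) := by rw [hUdet, one_mul]

private lemma one_le_det_one_add {n : ℕ} {Q : Matrix (Fin n) (Fin n) ℝ} (hQ : Q.PosSemidef) :
    1 ≤ (1 + Q).det := by
  rw [det_one_add_eq hQ.isHermitian]
  calc (1:ℝ) = ∏ _i : Fin n, (1:ℝ) := by simp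
    _ ≤ ∏ i, (1 + hQ.isHermitian.eigenvalues i) :=
        Finset.prod_le_prod (fun i _ => zero_le_one)
          (fun i _ => by linarith [hQ.eigenvalues_nonneg i])

private lemma det_le_det_add {n : ℕ} {M P : Matrix (Fin n) (Fin n) ℝ}
    (hM : M.PosDef) (hP : P.PosSemidef) : M.det ≤ (M + P).det := by
  classical
  open scoped MatrixOrder in
  set S := CFC.sqrt M with hS
  have hSS : S * S = M := CFC.sqrt_mul_sqrt_self M hM.posSemidef.nonneg
  have hdetS : IsUnit S.det := by
    have hmm : S.det * S.det = M.det := by rw [← det_mul, hSS]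
    have hne : S.det ≠ 0 := by
      intro h
      rw [h, mul_zero] at hmm
      exact hM.det_pos.ne hmm
    exact hne.isUnit
  have hSinv : S * S⁻¹ = 1 := mul_nonsing_inv S hdetS
  have hSinv' : S⁻¹ * S = 1 := nonsing_inv_mul S hdetS
  set Q := S⁻¹ * P * S⁻¹ with hQdef
  have hQ : Q.PosSemidef := by
    have := hP.conjTranspose_mul_mul_same S⁻¹
    rwa [conjTranspose_nonsing_inv, (CFC.sqrt_nonneg M).posSemidef.isHermitian.eq] at this
  have hback : S * (S⁻¹ * P * S⁻¹) * S = P := by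
    calc S * (S⁻¹ * P * S⁻¹) * S = (S * S⁻¹) * P * (S⁻¹ * S) := by
          simp only [Matrix.mul_assoc]
      _ = P := by rw [hSinv, hSinv', Matrix.one_mul, Matrix.mul_one]
  have key : M + P = S * (1 + Q) * S := by
    rw [mul_add, mul_one, add_mul, hSS, hQdef, hback]
  have hdetM : S.det * S.det = M.det := by rw [← det_mul, hSS]
  rw [key, det_mul, det_mul]
  calc M.det = M.det * 1 := (mul_one _).symm
    _ ≤ M.det * (1 + Q).det := by
        exact mul_le_mul_of_nonneg_left (one_le_det_one_add hQ) hM.det_pos.le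
    _ = S.det * (1 + Q).det * S.det := by rw [← hdetM]; ring

private lemma abs_dotProduct_le {n : ℕ} (M : Matrix (Fin n) (Fin n) ℝ) (x : Fin n → ℝ) :
    |x ⬝ᵥ M *ᵥ x| ≤ ‖Matrix.toEuclideanCLM (𝕜 := ℝ) M‖ * (x ⬝ᵥ x) := by
  set T := Matrix.toEuclideanCLM (𝕜 := ℝ) M
  set y : EuclideanSpace ℝ (Fin n) := (WithLp.equiv 2 _).symm x with hy
  have hTy : T y = (WithLp.equiv 2 _).symm (M *ᵥ x) := by
    rw [hy]; rfl
  have h1 : x ⬝ᵥ M *ᵥ x = inner ℝ y (T y) := by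
    rw [hTy, hy]
    simp [PiLp.inner_apply, RCLike.inner_apply, dotProduct, mul_comm]
  have h2 : x ⬝ᵥ x = ‖y‖ ^ 2 := by
    rw [← real_inner_self_eq_norm_sq, hy]
    simp only [PiLp.inner_apply, WithLp.equiv_symm_apply, RCLike.inner_apply, conj_trivial, dotProduct, mul_comm]
  rw [h1, h2]
  calc |inner ℝ y (T y)| ≤ ‖y‖ * ‖T y‖ := abs_real_inner_le_norm y (T y)
    _ ≤ ‖y‖ * (‖T‖ * ‖y‖) :=
        mul_le_mul_of_nonneg_left (T.le_opNorm y) (norm_nonneg y)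
    _ = ‖T‖ * ‖y‖ ^ 2 := by ring

private lemma key_ineq {n : ℕ} (A B : Matrix (Fin n) (Fin n) ℝ)
    (hA : A.PosSemidef) (hB : B.PosSemidef) :
    (1 + A).det ≤ (1 + ‖Matrix.toEuclideanCLM (𝕜 := ℝ) (A - B)‖) ^ n * (1 + B).det := by
  classical
  set ε := ‖Matrix.toEuclideanCLM (𝕜 := ℝ) (A - B)‖ with hε
  have hε0 : 0 ≤ ε := norm_nonneg _
  set P := (1 + ε) • (1 + B) - (1 + A) with hP
  have hPsd : P.PosSemidef := by
    refine Matrix.PosSemidef.of_dotProduct_mulVec_nonneg ?_ ?_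
    · show Pᴴ = P
      have hAt : Aᵀ = A := by simpa using hA.isHermitian.eq
      have hBt : Bᵀ = B := by simpa using hB.isHermitian.eq
      rw [hP]
      simp [conjTranspose_sub, conjTranspose_smul, conjTranspose_add, hAt, hBt]
    · intro x
      have habs := abs_dotProduct_le (A - B) x
      have hxx : (0:ℝ) ≤ x ⬝ᵥ x := by
        simpa using dotProduct_star_self_nonneg x
      have hBx : (0:ℝ) ≤ x ⬝ᵥ B *ᵥ x := by
        simpa using hB.dotProduct_mulVec_nonneg x
      have hstar : star x = x := by simp
      rw [hP]
      simp only [hstar, sub_mulVec, dotProduct_sub, smul_mulVec, dotProduct_smul,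
        add_mulVec, dotProduct_add, one_mulVec, RCLike.ofReal_real_eq_id]
      have hsub : x ⬝ᵥ (A - B) *ᵥ x = x ⬝ᵥ A *ᵥ x - x ⬝ᵥ B *ᵥ x := by
        rw [sub_mulVec, dotProduct_sub]
      have := abs_le.mp habs
      simp only [smul_eq_mul]
      nlinarith [this.1, this.2]
  have h1A : (1 + A).PosDef := Matrix.PosDef.one.add_posSemidef hA
  have : (1 + A).det ≤ ((1 + A) + P).det := det_le_det_add h1A hPsd
  have heq : (1 + A) + P = (1 + ε) • (1 + B) := by rw [hP]; abel
  rw [heq, det_smul] at this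
  simpa using this

/-- Stability of `det (Id + ·)` in the operator norm: for positive semi-definite `A, B`,
`(1 + ‖A - B‖_op)⁻ⁿ ≤ det (Id + A) / det (Id + B) ≤ (1 + ‖A - B‖_op)ⁿ`. -/
theorem det_one_add_div_det_one_add_bounds {n : ℕ} (A B : Matrix (Fin n) (Fin n) ℝ)
    (hA : A.PosSemidef) (hB : B.PosSemidef) :
    1 / (1 + ‖Matrix.toEuclideanCLM (𝕜 := ℝ) (A - B)‖) ^ n ≤ (1 + A).det / (1 + B).det ∧
      (1 + A).det / (1 + B).det ≤ (1 + ‖Matrix.toEuclideanCLM (𝕜 := ℝ) (A - B)‖) ^ n := by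
  set ε := ‖Matrix.toEuclideanCLM (𝕜 := ℝ) (A - B)‖ with hε
  have hε0 : 0 ≤ ε := norm_nonneg _
  have hεpow : (0:ℝ) < (1 + ε) ^ n := pow_pos (by linarith) n
  have hdetB : 0 < (1 + B).det := (Matrix.PosDef.one.add_posSemidef hB).det_pos
  have hdetA : 0 < (1 + A).det := (Matrix.PosDef.one.add_posSemidef hA).det_pos
  have h1 : (1 + A).det ≤ (1 + ε) ^ n * (1 + B).det := key_ineq A B hA hB
  have hBA : ‖Matrix.toEuclideanCLM (𝕜 := ℝ) (B - A)‖ = ε := by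
    rw [hε, ← norm_neg]
    congr 1
    rw [← map_neg, neg_sub]
  have h2 : (1 + B).det ≤ (1 + ε) ^ n * (1 + A).det := by
    have := key_ineq B A hB hA
    rwa [hBA] at this
  constructor
  · rw [div_le_div_iff₀ hεpow hdetB, one_mul]
    calc (1 + B).det ≤ (1 + ε) ^ n * (1 + A).det := h2
      _ = (1 + A).det * (1 + ε) ^ n := by ring
  · rw [div_le_iff₀ hdetB]
    linarith [h1]
end

section
/- Let A, B, C be positive semi-definite n×n matrices with A ≥ C and B ≥ C (in the Loewner order). Then for any real numbers 0 ≤ t₁ ≤ t₂, det(Id + t₁A) · det(Id + t₂B) ≥ det(Id + t₂C) · det(Id + t₁(A + B − C)). -/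
open Matrix

set_option maxHeartbeats 1000000

namespace DetIneq

variable {n : ℕ}

open scoped MatrixOrder

lemma psd_smul {P : Matrix (Fin n) (Fin n) ℝ} (hP : P.PosSemidef) {t : ℝ} (ht : 0 ≤ t) :
    (t • P).PosSemidef := by
  refine .of_dotProduct_mulVec_nonneg ?_ fun x => ?_
  · unfold Matrix.IsHermitian
    rw [conjTranspose_smul, hP.1.eq]
    simp
  · rw [smul_mulVec, dotProduct_smul]
    simpa using mul_nonneg ht (hP.dotProduct_mulVec_nonneg x)

lemma one_le_det_one_add {Q : Matrix (Fin n) (Fin n) ℝ} (hQ : Q.PosSemidef) :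
    1 ≤ (1 + Q).det := by
  set U : Matrix (Fin n) (Fin n) ℝ := (hQ.1.eigenvectorUnitary : Matrix (Fin n) (Fin n) ℝ)
  have hU : U * star U = 1 := (Matrix.mem_unitaryGroup_iff).mp (hQ.1.eigenvectorUnitary).2
  have hsp : 1 + Q = U * (1 + diagonal (RCLike.ofReal ∘ hQ.1.eigenvalues)) * star U := by
    rw [mul_add, add_mul, mul_one, hU]
    exact congrArg (1 + ·) hQ.1.spectral_theorem
  rw [hsp, det_mul_right_comm, hU, one_mul, ← diagonal_one, diagonal_add, det_diagonal]
  calc (1:ℝ) = ∏ _i : Fin n, (1:ℝ) := by simp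
    _ ≤ _ := Finset.prod_le_prod (fun i _ => zero_le_one) fun i _ => by
        have := hQ.eigenvalues_nonneg i
        simp only [Pi.add_apply, Function.comp_apply, RCLike.ofReal_real_eq_id, id]
        linarith

lemma sqrt_det_isUnit {M : Matrix (Fin n) (Fin n) ℝ} (hM : M.PosDef) :
    IsUnit (CFC.sqrt M).det := by
  have h2 : (CFC.sqrt M).det * (CFC.sqrt M).det = M.det := by
    rw [← det_mul, CFC.sqrt_mul_sqrt_self M hM.posSemidef.nonneg]
  have h3 := hM.det_pos
  refine isUnit_iff_ne_zero.mpr fun h0 => ?_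
  rw [h0, mul_zero] at h2
  exact absurd h2.symm (ne_of_gt h3)

lemma posDef_conj {M P : Matrix (Fin n) (Fin n) ℝ} (hM : M.PosDef) (hP : IsUnit P.det) :
    (Pᴴ * M * P).PosDef := by
  refine .of_dotProduct_mulVec_pos (isHermitian_conjTranspose_mul_mul P hM.1) fun x hx => ?_
  have hPx : P *ᵥ x ≠ 0 := by
    intro h0
    apply hx
    have : P⁻¹ *ᵥ (P *ᵥ x) = x := by
      rw [mulVec_mulVec, nonsing_inv_mul _ hP, one_mulVec]
    rw [← this, h0, mulVec_zero]
  simpa only [star_mulVec, dotProduct_mulVec, vecMul_vecMul] using hM.dotProduct_mulVec_pos hPx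

lemma det_mono {M N : Matrix (Fin n) (Fin n) ℝ} (hM : M.PosDef) (h : (N - M).PosSemidef) :
    M.det ≤ N.det := by
  set S := CFC.sqrt M with hSdef
  have hS : S * S = M := CFC.sqrt_mul_sqrt_self M hM.posSemidef.nonneg
  have hSH : S⁻¹.IsHermitian := (CFC.sqrt_nonneg M).posSemidef.1.inv
  have hdet : IsUnit S.det := sqrt_det_isUnit hM
  have h1 : S * S⁻¹ = 1 := mul_nonsing_inv _ hdet
  have h2 : S⁻¹ * S = 1 := nonsing_inv_mul _ hdet
  set Q := S⁻¹ * (N - M) * S⁻¹ with hQdef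
  have hQ : Q.PosSemidef := by
    have := h.conjTranspose_mul_mul_same S⁻¹
    rwa [hSH.eq] at this
  have key : N = S * (1 + Q) * S := by
    rw [mul_add, mul_one, add_mul, hS, hQdef]
    have : S * (S⁻¹ * (N - M) * S⁻¹) * S = (S * S⁻¹) * (N - M) * (S⁻¹ * S) := by
      simp only [Matrix.mul_assoc]
    rw [this, h1, h2, Matrix.one_mul, Matrix.mul_one, add_sub_cancel]
  have hone := one_le_det_one_add hQ
  have hSS : S.det * S.det = M.det := by rw [← det_mul, hS]
  rw [key, det_mul, det_mul]
  nlinarith [hM.det_pos]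

lemma inv_anti {M N : Matrix (Fin n) (Fin n) ℝ} (hM : M.PosDef) (hN : N.PosDef)
    (h : (M - N).PosSemidef) : (N⁻¹ - M⁻¹).PosSemidef := by
  set T := CFC.sqrt N with hTdef
  have hT : T * T = N := CFC.sqrt_mul_sqrt_self N hN.posSemidef.nonneg
  have hTH : T.IsHermitian := (CFC.sqrt_nonneg N).posSemidef.1
  have hTiH : T⁻¹.IsHermitian := hTH.inv
  have hdet : IsUnit T.det := sqrt_det_isUnit hN
  have hdeti : IsUnit T⁻¹.det := by
    rw [det_nonsing_inv]
    exact hdet.ringInverse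
  have h1 : T * T⁻¹ = 1 := mul_nonsing_inv _ hdet
  have h2 : T⁻¹ * T = 1 := nonsing_inv_mul _ hdet
  set X := T⁻¹ * M * T⁻¹ with hXdef
  have hX : X.PosDef := by
    have := posDef_conj hM hdeti
    rwa [hTiH.eq] at this
  have hTNT : T⁻¹ * N * T⁻¹ = 1 := by
    rw [← hT]
    calc T⁻¹ * (T * T) * T⁻¹ = (T⁻¹ * T) * (T * T⁻¹) := by simp only [Matrix.mul_assoc]
      _ = 1 := by rw [h1, h2, Matrix.one_mul]
  have hX1 : (X - 1).PosSemidef := by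
    have hps := h.conjTranspose_mul_mul_same T⁻¹
    rw [hTiH.eq] at hps
    have : T⁻¹ * (M - N) * T⁻¹ = X - 1 := by
      rw [Matrix.mul_sub, Matrix.sub_mul, ← hXdef, hTNT]
    rwa [this] at hps
  -- 1 - X⁻¹ is PSD
  set S := CFC.sqrt X with hSdef
  have hS : S * S = X := CFC.sqrt_mul_sqrt_self X hX.posSemidef.nonneg
  have hSiH : S⁻¹.IsHermitian := (CFC.sqrt_nonneg X).posSemidef.1.inv
  have hdS : IsUnit S.det := sqrt_det_isUnit hX
  have hs1 : S * S⁻¹ = 1 := mul_nonsing_inv _ hdS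
  have hs2 : S⁻¹ * S = 1 := nonsing_inv_mul _ hdS
  have hSXS : S⁻¹ * X * S⁻¹ = 1 := by
    rw [← hS]
    calc S⁻¹ * (S * S) * S⁻¹ = (S⁻¹ * S) * (S * S⁻¹) := by simp only [Matrix.mul_assoc]
      _ = 1 := by rw [hs1, hs2, Matrix.one_mul]
  have hSS' : S⁻¹ * S⁻¹ = X⁻¹ := by rw [← Matrix.mul_inv_rev, hS]
  have hoX : (1 - X⁻¹).PosSemidef := by
    have hps := hX1.conjTranspose_mul_mul_same S⁻¹
    rw [hSiH.eq] at hps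
    have : S⁻¹ * (X - 1) * S⁻¹ = 1 - X⁻¹ := by
      rw [Matrix.mul_sub, Matrix.sub_mul, hSXS, Matrix.mul_one, hSS']
    rwa [this] at hps
  -- X⁻¹ = T * M⁻¹ * T
  have hXinv : X⁻¹ = T * M⁻¹ * T := by
    rw [hXdef, Matrix.mul_inv_rev, Matrix.mul_inv_rev, nonsing_inv_nonsing_inv _ hdet,
      Matrix.mul_assoc]
  -- N⁻¹ - M⁻¹ = T⁻¹ * (1 - X⁻¹) * T⁻¹
  have hTT : T⁻¹ * T⁻¹ = N⁻¹ := by rw [← Matrix.mul_inv_rev, hT]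
  have hfinal : T⁻¹ * (1 - X⁻¹) * T⁻¹ = N⁻¹ - M⁻¹ := by
    rw [Matrix.mul_sub, Matrix.sub_mul, Matrix.mul_one, hTT, hXinv]
    congr 1
    calc T⁻¹ * (T * M⁻¹ * T) * T⁻¹ = (T⁻¹ * T) * M⁻¹ * (T * T⁻¹) := by
          simp only [Matrix.mul_assoc]
      _ = M⁻¹ := by rw [h1, h2, Matrix.one_mul, Matrix.mul_one]
  have hps := hoX.conjTranspose_mul_mul_same T⁻¹
  rw [hTiH.eq] at hps
  rwa [hfinal] at hps

lemma psd_conj {Q R : Matrix (Fin n) (Fin n) ℝ} (hQ : Q.PosSemidef) (hRH : R.IsHermitian) :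
    (R * Q * R).PosSemidef := by
  have := hQ.conjTranspose_mul_mul_same R
  rwa [hRH.eq] at this

lemma ratio {M N P : Matrix (Fin n) (Fin n) ℝ} (hM : M.PosDef) (hN : N.PosDef)
    (h : (M - N).PosSemidef) (hP : P.PosSemidef) :
    (M + P).det * N.det ≤ (N + P).det * M.det := by
  set R := CFC.sqrt P with hRdef
  have hR : R * R = P := CFC.sqrt_mul_sqrt_self P hP.nonneg
  have hRH : R.IsHermitian := (CFC.sqrt_nonneg P).posSemidef.1
  have key : ∀ (K : Matrix (Fin n) (Fin n) ℝ), K.PosDef →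
      (K + P).det = K.det * (1 + R * K⁻¹ * R).det := by
    intro K hK
    have hdK : IsUnit K.det := (Matrix.isUnit_iff_isUnit_det _).mp hK.isUnit
    have h1 : K * K⁻¹ = 1 := mul_nonsing_inv _ hdK
    have e1 : K + P = K * (1 + K⁻¹ * P) := by
      rw [Matrix.mul_add, Matrix.mul_one, ← Matrix.mul_assoc, h1, Matrix.one_mul]
    rw [e1, det_mul]
    congr 1
    have e2 : K⁻¹ * P = (K⁻¹ * R) * R := by rw [Matrix.mul_assoc, hR]
    rw [e2, det_one_add_mul_comm, ← Matrix.mul_assoc]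
  rw [key M hM, key N hN]
  have hd1 : (1 + R * M⁻¹ * R).det ≤ (1 + R * N⁻¹ * R).det := by
    apply det_mono
    · exact Matrix.PosDef.one.add_posSemidef (psd_conj hM.inv.posSemidef hRH)
    · have hps := psd_conj (inv_anti hM hN h) hRH
      have e3 : R * (N⁻¹ - M⁻¹) * R = (1 + R * N⁻¹ * R) - (1 + R * M⁻¹ * R) := by
        rw [Matrix.mul_sub, Matrix.sub_mul]; abel
      rwa [e3] at hps
  have hMd := hM.det_pos
  have hNd := hN.det_pos
  have h0 : (0:ℝ) ≤ (1 + R * M⁻¹ * R).det :=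
    le_trans zero_le_one (one_le_det_one_add (psd_conj hM.inv.posSemidef hRH))
  nlinarith [mul_pos hMd hNd]

lemma stepB {B C : Matrix (Fin n) (Fin n) ℝ} (hB : B.PosSemidef) (hC : C.PosSemidef)
    (hBC : (B - C).PosSemidef) {t₁ t₂ : ℝ} (ht₁ : 0 ≤ t₁) (ht₁₂ : t₁ ≤ t₂) :
    (1 + t₂ • C).det * (1 + t₁ • B).det ≤ (1 + t₂ • B).det * (1 + t₁ • C).det := by
  have ht₂ : 0 ≤ t₂ := ht₁.trans ht₁₂
  have hD : (B - C).PosSemidef := hBC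
  set R := CFC.sqrt (B - C) with hRdef
  have hR : R * R = B - C := CFC.sqrt_mul_sqrt_self (B - C) hD.nonneg
  have hRH : R.IsHermitian := (CFC.sqrt_nonneg (B - C)).posSemidef.1
  have hNpd : ∀ t : ℝ, 0 ≤ t → (1 + t • C).PosDef := fun t ht =>
    Matrix.PosDef.one.add_posSemidef (psd_smul hC ht)
  have key : ∀ t : ℝ, 0 ≤ t →
      (1 + t • B).det = (1 + t • C).det * (1 + t • (R * (1 + t • C)⁻¹ * R)).det := by
    intro t ht
    have hNt := hNpd t ht
    have hdN : IsUnit (1 + t • C).det := (Matrix.isUnit_iff_isUnit_det _).mp hNt.isUnit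
    have h1 : (1 + t • C) * (1 + t • C)⁻¹ = 1 := mul_nonsing_inv _ hdN
    have e0 : 1 + t • B = (1 + t • C) + t • (B - C) := by
      rw [add_assoc, ← smul_add, add_sub_cancel]
    have e1 : (1 + t • C) + t • (B - C)
        = (1 + t • C) * (1 + (1 + t • C)⁻¹ * (t • (B - C))) := by
      rw [Matrix.mul_add, Matrix.mul_one, ← Matrix.mul_assoc, h1, Matrix.one_mul]
    have e2 : (1 + t • C)⁻¹ * (t • (B - C)) = (t • ((1 + t • C)⁻¹ * R)) * R := by
      rw [mul_smul_comm, ← hR, ← Matrix.mul_assoc, smul_mul_assoc]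
    rw [e0, e1, det_mul, e2, det_one_add_mul_comm]
    congr 2
    rw [mul_smul_comm, Matrix.mul_assoc]
  rw [key t₁ ht₁, key t₂ ht₂]
  have hN₁ := hNpd t₁ ht₁
  have hN₂ := hNpd t₂ ht₂
  have hu₁ : IsUnit (1 + t₁ • C).det := (Matrix.isUnit_iff_isUnit_det _).mp hN₁.isUnit
  have hu₂ : IsUnit (1 + t₂ • C).det := (Matrix.isUnit_iff_isUnit_det _).mp hN₂.isUnit
  have hCC : (C * C).PosSemidef := by
    have := Matrix.posSemidef_conjTranspose_mul_self C
    rwa [hC.1.eq] at this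
  have hG : ((1 + t₂ • C) * (1 + t₁ • C)).PosDef := by
    have e : (1 + t₂ • C) * (1 + t₁ • C)
        = 1 + ((t₁ + t₂) • C + (t₂ * t₁) • (C * C)) := by
      simp only [Matrix.mul_add, Matrix.add_mul, Matrix.one_mul, Matrix.mul_one,
        smul_mul_assoc, mul_smul_comm, smul_smul, add_smul]
      module
    rw [e]
    exact Matrix.PosDef.one.add_posSemidef
      ((psd_smul hC (by linarith)).add (psd_smul hCC (mul_nonneg ht₂ ht₁)))
  have hE : (1 + t₁ • C) * (t₂ • (1 + t₂ • C)⁻¹ - t₁ • (1 + t₁ • C)⁻¹) * (1 + t₂ • C)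
      = (t₂ - t₁) • 1 := by
    have a1 : (1 + t₁ • C) * (t₂ • (1 + t₂ • C)⁻¹) * (1 + t₂ • C) = t₂ • (1 + t₁ • C) := by
      rw [mul_smul_comm, smul_mul_assoc, Matrix.mul_assoc, nonsing_inv_mul _ hu₂,
        Matrix.mul_one]
    have a2 : (1 + t₁ • C) * (t₁ • (1 + t₁ • C)⁻¹) * (1 + t₂ • C) = t₁ • (1 + t₂ • C) := by
      rw [mul_smul_comm, smul_mul_assoc, mul_nonsing_inv _ hu₁, Matrix.one_mul]
    rw [Matrix.mul_sub, Matrix.sub_mul, a1, a2]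
    module
  have hY : (t₂ • (1 + t₂ • C)⁻¹ - t₁ • (1 + t₁ • C)⁻¹).PosSemidef := by
    have hid : t₂ • (1 + t₂ • C)⁻¹ - t₁ • (1 + t₁ • C)⁻¹
        = (t₂ - t₁) • ((1 + t₂ • C) * (1 + t₁ • C))⁻¹ := by
      have hre : t₂ • (1 + t₂ • C)⁻¹ - t₁ • (1 + t₁ • C)⁻¹
          = (1 + t₁ • C)⁻¹ * ((1 + t₁ • C) * (t₂ • (1 + t₂ • C)⁻¹ - t₁ • (1 + t₁ • C)⁻¹)
              * (1 + t₂ • C)) * (1 + t₂ • C)⁻¹ := by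
        have : ∀ Y : Matrix (Fin n) (Fin n) ℝ,
            (1 + t₁ • C)⁻¹ * ((1 + t₁ • C) * Y * (1 + t₂ • C)) * (1 + t₂ • C)⁻¹
            = ((1 + t₁ • C)⁻¹ * (1 + t₁ • C)) * Y * ((1 + t₂ • C) * (1 + t₂ • C)⁻¹) := by
          intro Y; simp only [Matrix.mul_assoc]
        rw [this, nonsing_inv_mul _ hu₁, mul_nonsing_inv _ hu₂, Matrix.one_mul,
          Matrix.mul_one]
      rw [hre, hE, mul_smul_comm, Matrix.mul_one, smul_mul_assoc, Matrix.mul_inv_rev]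
    rw [hid]
    exact psd_smul hG.inv.posSemidef (sub_nonneg.mpr ht₁₂)
  have hd : (1 + t₁ • (R * (1 + t₁ • C)⁻¹ * R)).det
      ≤ (1 + t₂ • (R * (1 + t₂ • C)⁻¹ * R)).det := by
    apply det_mono
    · exact Matrix.PosDef.one.add_posSemidef
        (psd_smul (psd_conj hN₁.inv.posSemidef hRH) ht₁)
    · have hps := psd_conj hY hRH
      have e : R * (t₂ • (1 + t₂ • C)⁻¹ - t₁ • (1 + t₁ • C)⁻¹) * R
          = (1 + t₂ • (R * (1 + t₂ • C)⁻¹ * R)) - (1 + t₁ • (R * (1 + t₁ • C)⁻¹ * R)) := by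
        rw [Matrix.mul_sub, Matrix.sub_mul]
        simp only [mul_smul_comm, smul_mul_assoc, Matrix.mul_assoc]
        abel
      rwa [e] at hps
  have h0 : (0:ℝ) ≤ (1 + t₁ • (R * (1 + t₁ • C)⁻¹ * R)).det :=
    le_trans zero_le_one (one_le_det_one_add
      (psd_smul (psd_conj hN₁.inv.posSemidef hRH) ht₁))
  nlinarith [hN₁.det_pos, hN₂.det_pos, mul_pos hN₁.det_pos hN₂.det_pos]

end DetIneq

open DetIneq

/-- If `A ≥ C`, `B ≥ C` are positive semi-definite and `0 ≤ t₁ ≤ t₂`, then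
`det (Id + t₂ C) * det (Id + t₁ (A + B - C)) ≤ det (Id + t₁ A) * det (Id + t₂ B)`. -/
theorem det_ineq_two_times {n : ℕ} (A B C : Matrix (Fin n) (Fin n) ℝ)
    (hA : A.PosSemidef) (hB : B.PosSemidef) (hC : C.PosSemidef)
    (hAC : (A - C).PosSemidef) (hBC : (B - C).PosSemidef)
    (t₁ t₂ : ℝ) (ht₁ : 0 ≤ t₁) (ht₁₂ : t₁ ≤ t₂) :
    (1 + t₂ • C).det * (1 + t₁ • (A + B - C)).det ≤
      (1 + t₁ • A).det * (1 + t₂ • B).det := by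
  have ht₂ : 0 ≤ t₂ := ht₁.trans ht₁₂
  have hMA : (1 + t₁ • A).PosDef := Matrix.PosDef.one.add_posSemidef (psd_smul hA ht₁)
  have hNC : (1 + t₁ • C).PosDef := Matrix.PosDef.one.add_posSemidef (psd_smul hC ht₁)
  have hdiff : ((1 + t₁ • A) - (1 + t₁ • C)).PosSemidef := by
    have e : (1 + t₁ • A) - (1 + t₁ • C) = t₁ • (A - C) := by
      rw [smul_sub]; abel
    rw [e]; exact psd_smul hAC ht₁
  have stepA := ratio hMA hNC hdiff (psd_smul hBC ht₁)
  have e1 : (1 + t₁ • A) + t₁ • (B - C) = 1 + t₁ • (A + B - C) := by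
    rw [add_assoc, ← smul_add, add_sub_assoc]
  have e2 : (1 + t₁ • C) + t₁ • (B - C) = 1 + t₁ • B := by
    rw [add_assoc, ← smul_add, add_sub_cancel]
  rw [e1, e2] at stepA
  have sB := stepB hB hC hBC ht₁ ht₁₂
  have hXpos : (0:ℝ) < (1 + t₁ • (A + B - C)).det := by
    refine Matrix.PosDef.det_pos (Matrix.PosDef.one.add_posSemidef (psd_smul ?_ ht₁))
    have : A + B - C = A + (B - C) := by abel
    rw [this]; exact hA.add hBC
  have hB₂pos : (0:ℝ) < (1 + t₂ • B).det :=
    (Matrix.PosDef.one.add_posSemidef (psd_smul hB ht₂)).det_pos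
  have hB₁pos : (0:ℝ) < (1 + t₁ • B).det :=
    (Matrix.PosDef.one.add_posSemidef (psd_smul hB ht₁)).det_pos
  have hN₂pos : (0:ℝ) < (1 + t₂ • C).det :=
    (Matrix.PosDef.one.add_posSemidef (psd_smul hC ht₂)).det_pos
  nlinarith [hNC.det_pos, hMA.det_pos,
    mul_le_mul_of_nonneg_left stepA hN₂pos.le,
    mul_le_mul_of_nonneg_right sB hMA.det_pos.le]
end

section
/- For positive semi-definite n×n matrices B ≥ C > 0 (B − C positive semi-definite, C positive definite), the function t ↦ det(Id + tB)/det(Id + tC) is non-decreasing on [0, ∞). -/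
open Matrix

section Aux
variable {n : ℕ}
lemma psd_smul {A : Matrix (Fin n) (Fin n) ℝ} (hA : A.PosSemidef) {c : ℝ} (hc : 0 ≤ c) :
    (c • A).PosSemidef := by
  refine .of_dotProduct_mulVec_nonneg ?_ fun x => ?_
  · unfold Matrix.IsHermitian
    rw [conjTranspose_smul, hA.1]
    simp [star]
  · rw [smul_mulVec, dotProduct_smul, smul_eq_mul]
    exact mul_nonneg hc (hA.dotProduct_mulVec_nonneg x)

lemma det_one_add_psd {P : Matrix (Fin n) (Fin n) ℝ} (hP : P.PosSemidef) :
    1 ≤ (1 + P).det := by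
  set U : Matrix (Fin n) (Fin n) ℝ := (hP.1.eigenvectorUnitary : Matrix (Fin n) (Fin n) ℝ) with hU
  have hUU : U * star U = 1 := (Matrix.mem_unitaryGroup_iff).mp (hP.1.eigenvectorUnitary).2
  have h1 : (1 : Matrix (Fin n) (Fin n) ℝ) = U * 1 * star U := by rw [mul_one, hUU]
  have hsp := hP.1.spectral_theorem
  rw [Unitary.conjStarAlgAut_apply] at hsp
  have key : 1 + P = U * (1 + diagonal (RCLike.ofReal ∘ hP.1.eigenvalues)) * star U := by
    rw [mul_add, add_mul, ← h1, ← hsp]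
  rw [key, det_mul_right_comm, hUU, one_mul]
  have : (1 : Matrix (Fin n) (Fin n) ℝ) + diagonal (RCLike.ofReal ∘ hP.1.eigenvalues)
      = diagonal (fun i => 1 + hP.1.eigenvalues i) := by
    rw [← diagonal_one, diagonal_add]
    rfl
  rw [this, det_diagonal]
  calc (1:ℝ) = ∏ _i : Fin n, 1 := by simp
  _ ≤ ∏ i, (1 + hP.1.eigenvalues i) := by
      apply Finset.prod_le_prod
      · intros; norm_num
      · intro i _; linarith [hP.eigenvalues_nonneg i]

lemma conj_posDef {A M : Matrix (Fin n) (Fin n) ℝ} (hA : A.PosDef) (hM : IsUnit M.det) :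
    (Mᴴ * A * M).PosDef := by
  refine .of_dotProduct_mulVec_pos ?_ fun x hx => ?_
  · unfold Matrix.IsHermitian
    simp only [conjTranspose_mul, conjTranspose_conjTranspose, hA.1.eq, mul_assoc]
  · have hMx : M *ᵥ x ≠ 0 := by
      intro h
      apply hx
      have : M⁻¹ *ᵥ (M *ᵥ x) = x := by rw [mulVec_mulVec, nonsing_inv_mul _ hM, one_mulVec]
      rw [h, mulVec_zero] at this
      exact this.symm
    have := hA.dotProduct_mulVec_pos hMx
    convert this using 1
    simp only [star_trivial]
    show x ⬝ᵥ (Mᴴ * A * M) *ᵥ x = (M *ᵥ x) ⬝ᵥ A *ᵥ (M *ᵥ x)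
    rw [← mulVec_mulVec, ← mulVec_mulVec]
    have hMT : Mᴴ = Mᵀ := by
      ext i j; simp [conjTranspose_apply, star]
    rw [hMT, dotProduct_mulVec, vecMul_transpose]

open scoped MatrixOrder in
lemma det_le_det_of_sub_psd {X Y : Matrix (Fin n) (Fin n) ℝ} (hX : X.PosDef)
    (hD : (Y - X).PosSemidef) : X.det ≤ Y.det := by
  set S := CFC.sqrt X with hSdef
  have hSS : S * S = X := CFC.sqrt_mul_sqrt_self X hX.posSemidef.nonneg
  have hdetS : IsUnit S.det := by
    have : S.det * S.det = X.det := by rw [← det_mul, hSS]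
    have hx := hX.det_pos
    refine isUnit_iff_ne_zero.mpr fun h => ?_
    rw [h, mul_zero] at this; linarith [this ▸ hx]
  have hSh : Sᴴ = S := (CFC.sqrt_nonneg X).posSemidef.1
  have hSinv : (S⁻¹)ᴴ = S⁻¹ := by rw [conjTranspose_nonsing_inv, hSh]
  have hE : (S⁻¹ * (Y - X) * (S⁻¹)ᴴ).PosSemidef := hD.mul_mul_conjTranspose_same S⁻¹
  rw [hSinv] at hE
  have key : Y = S * (1 + S⁻¹ * (Y - X) * S⁻¹) * S := by
    rw [mul_add, add_mul, mul_one, hSS]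
    rw [← mul_assoc, ← mul_assoc, mul_nonsing_inv _ hdetS, one_mul,
      mul_assoc, nonsing_inv_mul _ hdetS, mul_one]
    abel
  have h1 := det_one_add_psd hE
  calc X.det = S.det * S.det * 1 := by rw [← det_mul, hSS, mul_one]
  _ ≤ S.det * S.det * (1 + S⁻¹ * (Y - X) * S⁻¹).det := by
      apply mul_le_mul_of_nonneg_left h1
      have : S.det * S.det = X.det := by rw [← det_mul, hSS]
      nlinarith [hX.det_pos]
  _ = Y.det := by
      have hYdet : Y.det = S.det * (1 + S⁻¹ * (Y - X) * S⁻¹).det * S.det := by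
        conv_lhs => rw [key]
        rw [det_mul, det_mul]
      rw [hYdet]; ring

lemma inv_sub_one_psd {Z : Matrix (Fin n) (Fin n) ℝ} (hZ : Z.PosDef)
    (h1 : ((1 : Matrix (Fin n) (Fin n) ℝ) - Z).PosSemidef) :
    (Z⁻¹ - 1).PosSemidef := by
  set U : Matrix (Fin n) (Fin n) ℝ := (hZ.1.eigenvectorUnitary : Matrix (Fin n) (Fin n) ℝ) with hUdef
  set d : Fin n → ℝ := hZ.1.eigenvalues with hddef
  have hUU : U * star U = 1 := (Matrix.mem_unitaryGroup_iff).mp (hZ.1.eigenvectorUnitary).2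
  have hUU' : star U * U = 1 := (Matrix.mem_unitaryGroup_iff').mp (hZ.1.eigenvectorUnitary).2
  have hsp : Z = U * diagonal d * star U := by
    have := hZ.1.spectral_theorem
    rw [Unitary.conjStarAlgAut_apply] at this
    exact this
  have hdpos : ∀ i, 0 < d i := hZ.eigenvalues_pos
  -- eigenvalues ≤ 1
  have hconj : (star U * (1 - Z) * U).PosSemidef := by
    have := h1.mul_mul_conjTranspose_same (star U)
    rwa [← star_eq_conjTranspose, star_star] at this
  have hdiag : star U * (1 - Z) * U = diagonal (fun i => 1 - d i) := by
    rw [hsp, mul_sub, sub_mul, mul_one, hUU']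
    rw [← mul_assoc, ← mul_assoc, hUU', one_mul, mul_assoc, hUU', mul_one]
    rw [← diagonal_one, diagonal_sub]
  rw [hdiag] at hconj
  have hle : ∀ i, d i ≤ 1 := by
    intro i
    have := (posSemidef_diagonal_iff.mp hconj) i
    linarith
  -- inverse formula
  have hZinv : Z⁻¹ = U * diagonal (fun i => (d i)⁻¹) * star U := by
    apply inv_eq_right_inv
    rw [hsp]
    have : U * diagonal d * star U * (U * diagonal (fun i => (d i)⁻¹) * star U)
        = U * (diagonal d * (star U * U) * diagonal (fun i => (d i)⁻¹)) * star U := by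
      simp only [mul_assoc]
    rw [this, hUU', mul_one, diagonal_mul_diagonal]
    have h2 : (fun i => d i * (d i)⁻¹) = fun _ => (1:ℝ) := by
      funext i; exact mul_inv_cancel₀ (hdpos i).ne'
    rw [h2, diagonal_one, mul_one, hUU]
  have e1 : diagonal (fun i => (d i)⁻¹ - 1) = diagonal (fun i => (d i)⁻¹) - 1 := by
    ext i j
    by_cases h : i = j <;> simp [diagonal, h]
  have key : Z⁻¹ - 1 = U * diagonal (fun i => (d i)⁻¹ - 1) * star U := by
    rw [e1, mul_sub, sub_mul, mul_one, hUU, hZinv]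
  rw [key]
  have hdiagpsd : (diagonal (fun i => (d i)⁻¹ - 1)).PosSemidef := by
    apply PosSemidef.diagonal
    intro i
    have h1i : 1 ≤ (d i)⁻¹ := (one_le_inv₀ (hdpos i)).mpr (hle i)
    simp only [Pi.zero_apply]
    linarith
  have := hdiagpsd.mul_mul_conjTranspose_same U
  rwa [← star_eq_conjTranspose] at this

open scoped MatrixOrder in
lemma inv_sub_inv_psd {X Y : Matrix (Fin n) (Fin n) ℝ} (hX : X.PosDef)
    (hD : (Y - X).PosSemidef) : (X⁻¹ - Y⁻¹).PosSemidef := by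
  have hY : Y.PosDef := by
    have := hX.add_posSemidef hD
    rwa [add_sub_cancel] at this
  set T := CFC.sqrt Y with hTdef
  have hTT : T * T = Y := CFC.sqrt_mul_sqrt_self Y hY.posSemidef.nonneg
  have hTh : Tᴴ = T := (CFC.sqrt_nonneg Y).posSemidef.1
  have hdetT : IsUnit T.det := by
    have h : T.det * T.det = Y.det := by rw [← det_mul, hTT]
    refine isUnit_iff_ne_zero.mpr fun h0 => ?_
    rw [h0, mul_zero] at h
    exact hY.det_pos.ne' h.symm
  have hTinvh : (T⁻¹)ᴴ = T⁻¹ := by rw [conjTranspose_nonsing_inv, hTh]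
  have hdetTinv : IsUnit (T⁻¹).det := isUnit_nonsing_inv_det _ hdetT
  -- Z := T⁻¹ X T⁻¹
  set Z := T⁻¹ * X * T⁻¹ with hZdef
  have hZ : Z.PosDef := by
    have := conj_posDef hX hdetTinv
    rwa [hTinvh] at this
  have hTiT : T⁻¹ * T = 1 := nonsing_inv_mul _ hdetT
  have hTTi : T * T⁻¹ = 1 := mul_nonsing_inv _ hdetT
  have h1Z : ((1 : Matrix (Fin n) (Fin n) ℝ) - Z).PosSemidef := by
    have hconj := hD.mul_mul_conjTranspose_same T⁻¹
    rw [hTinvh] at hconj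
    have : T⁻¹ * (Y - X) * T⁻¹ = 1 - Z := by
      rw [mul_sub, sub_mul, hZdef]
      congr 1
      rw [← hTT]
      calc T⁻¹ * (T * T) * T⁻¹ = T⁻¹ * T * (T * T⁻¹) := by simp only [mul_assoc]
      _ = 1 := by rw [hTiT, hTTi, mul_one]
    rwa [this] at hconj
  have hmain := inv_sub_one_psd hZ h1Z
  -- Z⁻¹ = T * X⁻¹ * T
  have hXdet : IsUnit X.det := isUnit_iff_ne_zero.mpr hX.det_pos.ne'
  have hZinv : Z⁻¹ = T * X⁻¹ * T := by
    apply inv_eq_right_inv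
    calc T⁻¹ * X * T⁻¹ * (T * X⁻¹ * T)
        = T⁻¹ * X * (T⁻¹ * T) * X⁻¹ * T := by simp only [mul_assoc]
      _ = T⁻¹ * (X * X⁻¹) * T := by rw [hTiT]; simp only [mul_assoc, mul_one]
      _ = 1 := by rw [mul_nonsing_inv _ hXdet, mul_one, hTiT]
  -- X⁻¹ - Y⁻¹ = T⁻¹ * (Z⁻¹ - 1) * T⁻¹
  have hfin : X⁻¹ - Y⁻¹ = T⁻¹ * (Z⁻¹ - 1) * T⁻¹ := by
    rw [hZinv, mul_sub, sub_mul, mul_one]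
    congr 1
    · refine Eq.symm ?_
      calc T⁻¹ * (T * X⁻¹ * T) * T⁻¹ = T⁻¹ * T * (X⁻¹ * (T * T⁻¹)) := by simp only [mul_assoc]
        _ = X⁻¹ := by rw [hTiT, hTTi, one_mul, mul_one]
    · rw [← hTT, Matrix.mul_inv_rev]
  rw [hfin]
  have := hmain.mul_mul_conjTranspose_same T⁻¹
  rwa [hTinvh] at this

variable {A : Matrix (Fin n) (Fin n) ℝ}

lemma one_add_smul_posDef (hA : A.PosDef) {s : ℝ} (hs : 0 ≤ s) :
    ((1 : Matrix (Fin n) (Fin n) ℝ) + s • A).PosDef :=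
  Matrix.PosDef.add_posSemidef Matrix.PosDef.one (psd_smul hA.posSemidef hs)

lemma factor_one_add_smul (hA : A.PosDef) {s t : ℝ} (hs : 0 ≤ s) (hst : s ≤ t) :
    (1 : Matrix (Fin n) (Fin n) ℝ) + t • A
      = (1 + (t - s) • (A * (1 + s • A)⁻¹)) * (1 + s • A) := by
  have hu : IsUnit ((1 : Matrix (Fin n) (Fin n) ℝ) + s • A).det :=
    isUnit_iff_ne_zero.mpr (one_add_smul_posDef hA hs).det_pos.ne'
  rw [add_mul, one_mul, smul_mul_assoc, mul_assoc, nonsing_inv_mul _ hu, mul_one]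
  have hts : s + (t - s) = t := by ring
  rw [add_assoc, ← add_smul, hts]

/-- `A * (1 + s•A)⁻¹` is positive semidefinite for `A` posdef, `s ≥ 0`. -/
lemma mul_inv_one_add_psd (hA : A.PosDef) {s : ℝ} (hs : 0 ≤ s) :
    (A * (1 + s • A)⁻¹).PosSemidef := by
  set W := ((1 : Matrix (Fin n) (Fin n) ℝ) + s • A)⁻¹ with hW
  have hpd := one_add_smul_posDef hA hs
  have hu : IsUnit ((1 : Matrix (Fin n) (Fin n) ℝ) + s • A).det :=
    isUnit_iff_ne_zero.mpr hpd.det_pos.ne'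
  have h1W : (1 + s • A) * W = 1 := mul_nonsing_inv _ hu
  have hW1 : W * (1 + s • A) = 1 := nonsing_inv_mul _ hu
  have hWh : Wᴴ = W := by rw [hW, conjTranspose_nonsing_inv, hpd.1.eq]
  have hfac : A + s • (A * A) = A * (1 + s • A) := by
    rw [mul_add, mul_one, mul_smul_comm]
  have hpsd : (A + s • (A * A)).PosSemidef := by
    apply hA.posSemidef.add
    apply psd_smul _ hs
    have := posSemidef_conjTranspose_mul_self A
    rwa [hA.1.eq] at this
  have hconj := hpsd.mul_mul_conjTranspose_same W
  rw [hWh] at hconj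
  have : W * (A + s • (A * A)) * W = A * W := by
    rw [hfac]
    calc W * (A * (1 + s • A)) * W = W * A * ((1 + s • A) * W) := by simp only [mul_assoc]
      _ = W * A := by rw [h1W, mul_one]
      _ = W * A * ((1 + s • A) * W) := by rw [h1W, mul_one]
      _ = W * (A * (1 + s • A)) * W := by simp only [mul_assoc]
      _ = W * ((1 + s • A) * A) * W := by
          congr 2
          rw [mul_add, add_mul, mul_one, one_mul, mul_smul_comm, smul_mul_assoc]
      _ = W * (1 + s • A) * (A * W) := by simp only [mul_assoc]
      _ = A * W := by rw [hW1, one_mul]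
  rwa [this] at hconj

/-- The key Loewner comparison. -/
lemma key_sub_psd (hB : A.PosDef) {C : Matrix (Fin n) (Fin n) ℝ} (hC : C.PosDef)
    (hBC : (A - C).PosSemidef) {s : ℝ} (hs : 0 ≤ s) :
    (A * (1 + s • A)⁻¹ - C * (1 + s • C)⁻¹).PosSemidef := by
  rcases eq_or_lt_of_le hs with rfl | hpos
  · simpa using hBC
  · have hpdB := one_add_smul_posDef hB hs
    have hpdC := one_add_smul_posDef hC hs
    have huB : IsUnit ((1 : Matrix (Fin n) (Fin n) ℝ) + s • A).det :=
      isUnit_iff_ne_zero.mpr hpdB.det_pos.ne'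
    have huC : IsUnit ((1 : Matrix (Fin n) (Fin n) ℝ) + s • C).det :=
      isUnit_iff_ne_zero.mpr hpdC.det_pos.ne'
    have hsub : ((1 + s • A) - (1 + s • C) : Matrix (Fin n) (Fin n) ℝ).PosSemidef := by
      have : ((1 + s • A) - (1 + s • C) : Matrix (Fin n) (Fin n) ℝ) = s • (A - C) := by
        rw [smul_sub]; abel
      rw [this]
      exact psd_smul hBC hs
    have hinv := inv_sub_inv_psd hpdC hsub
    have hid : ∀ (D : Matrix (Fin n) (Fin n) ℝ), D.PosDef → IsUnit ((1+s•D).det) →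
        s • (D * (1 + s • D)⁻¹) = 1 - (1 + s • D)⁻¹ := by
      intro D _ hu
      rw [← smul_mul_assoc]
      have h2 : s • D = (1 + s • D) - 1 := by abel
      nth_rewrite 1 [h2]
      rw [sub_mul, one_mul, mul_nonsing_inv _ hu]
    have hsK : s • (A * (1 + s • A)⁻¹ - C * (1 + s • C)⁻¹)
        = (1 + s • C)⁻¹ - (1 + s • A)⁻¹ := by
      rw [smul_sub, hid A hB huB, hid C hC huC]
      abel
    have : (A * (1 + s • A)⁻¹ - C * (1 + s • C)⁻¹)
        = s⁻¹ • (s • (A * (1 + s • A)⁻¹ - C * (1 + s • C)⁻¹)) := by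
      rw [smul_smul, inv_mul_cancel₀ hpos.ne', one_smul]
    rw [this, hsK]
    exact psd_smul hinv (inv_nonneg.mpr hs)

end Aux

/-- For `B ≥ C > 0`, the function `t ↦ det (Id + t B) / det (Id + t C)` is
non-decreasing on `[0, ∞)`. -/
theorem monotoneOn_det_ratio {n : ℕ} (B C : Matrix (Fin n) (Fin n) ℝ)
    (hC : C.PosDef) (hBC : (B - C).PosSemidef) :
    MonotoneOn (fun t : ℝ => (1 + t • B).det / (1 + t • C).det) (Set.Ici (0 : ℝ)) := by
  have hB : B.PosDef := by
    have := hC.add_posSemidef hBC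
    rwa [add_sub_cancel] at this
  intro s hs t ht hst
  simp only [Set.mem_Ici] at hs ht
  have hu : (0:ℝ) ≤ t - s := by linarith
  set M := (t - s) • (B * (1 + s • B)⁻¹) with hM
  set N := (t - s) • (C * (1 + s • C)⁻¹) with hN
  have hNpsd : N.PosSemidef := psd_smul (mul_inv_one_add_psd hC hs) hu
  have hXpd : ((1 : Matrix (Fin n) (Fin n) ℝ) + N).PosDef :=
    Matrix.PosDef.add_posSemidef Matrix.PosDef.one hNpsd
  have hMN : (M - N).PosSemidef := by
    have : M - N = (t - s) • (B * (1 + s • B)⁻¹ - C * (1 + s • C)⁻¹) := by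
      rw [hM, hN, smul_sub]
    rw [this]
    exact psd_smul (key_sub_psd hB hC hBC hs) hu
  have hdet : (1 + N).det ≤ (1 + M).det := by
    apply det_le_det_of_sub_psd hXpd
    have : (1 + M) - (1 + N) = M - N := by abel
    rwa [this]
  have hfB : (1 : Matrix (Fin n) (Fin n) ℝ) + t • B = (1 + M) * (1 + s • B) :=
    factor_one_add_smul hB hs hst
  have hfC : (1 : Matrix (Fin n) (Fin n) ℝ) + t • C = (1 + N) * (1 + s • C) :=
    factor_one_add_smul hC hs hst
  have dsB := (one_add_smul_posDef hB hs).det_pos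
  have dsC := (one_add_smul_posDef hC hs).det_pos
  have dtB := (one_add_smul_posDef hB (hs.trans hst)).det_pos
  have dtC := (one_add_smul_posDef hC (hs.trans hst)).det_pos
  have dN := hXpd.det_pos
  simp only
  rw [div_le_div_iff₀ dsC dtC]
  rw [hfB, hfC, det_mul, det_mul]
  nlinarith [mul_le_mul_of_nonneg_left (mul_le_mul_of_nonneg_right hdet dsC.le) dsB.le]
end

section
/- Let C, Z be positive semi-definite n×n matrices and let α, β ≥ 0 with α + β = 1. Then det(Id + αC) · det(Id + βC + Z) ≥ det(Id + C) · det(Id + αZ). -/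
open Matrix

section DetAux

variable {m : ℕ}

open scoped MatrixOrder

private lemma psd_smul' {M : Matrix (Fin m) (Fin m) ℝ} (hM : M.PosSemidef) {a : ℝ} (ha : 0 ≤ a) :
    (a • M).PosSemidef := by
  constructor
  · show (a • M)ᴴ = a • M
    rw [conjTranspose_smul, star_trivial, hM.isHermitian.eq]
  · intro x
    exact (hM.smul ha).2 x

private lemma one_le_det_one_add' {M : Matrix (Fin m) (Fin m) ℝ} (hM : M.PosSemidef) :
    1 ≤ (1 + M).det := by
  have hH := hM.isHermitian
  have hU : (hH.eigenvectorUnitary : Matrix (Fin m) (Fin m) ℝ) *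
      (star hH.eigenvectorUnitary : Matrix (Fin m) (Fin m) ℝ) = 1 :=
    mem_unitaryGroup_iff.mp hH.eigenvectorUnitary.2
  have h1 : (1 : Matrix (Fin m) (Fin m) ℝ) + M
      = (hH.eigenvectorUnitary : Matrix (Fin m) (Fin m) ℝ) *
        (1 + diagonal (RCLike.ofReal ∘ hH.eigenvalues)) *
        (star hH.eigenvectorUnitary : Matrix (Fin m) (Fin m) ℝ) := by
    rw [mul_add, add_mul, mul_one, hU]
    congr 1
    exact hH.spectral_theorem
  have hdU : ((hH.eigenvectorUnitary : Matrix (Fin m) (Fin m) ℝ)).det *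
      ((star hH.eigenvectorUnitary : Matrix (Fin m) (Fin m) ℝ)).det = 1 := by
    rw [← det_mul, hU, det_one]
  have h2 : (1 : Matrix (Fin m) (Fin m) ℝ) + diagonal (RCLike.ofReal ∘ hH.eigenvalues)
      = diagonal (fun i => 1 + hH.eigenvalues i) := by
    rw [← diagonal_one, diagonal_add]
    congr
  rw [h1, det_mul, det_mul, mul_right_comm, hdU, one_mul, h2, det_diagonal]
  calc (1:ℝ) = ∏ _i : Fin m, (1:ℝ) := by simp
    _ ≤ ∏ i : Fin m, (1 + hH.eigenvalues i) :=
        Finset.prod_le_prod (fun i _ => zero_le_one)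
          (fun i _ => by linarith [hM.eigenvalues_nonneg i])

/-- Monotonicity of the determinant: adding a PSD matrix to a positive definite
matrix does not decrease the determinant. -/
private lemma det_le_det_add' {X Y : Matrix (Fin m) (Fin m) ℝ} (hX : X.PosDef)
    (hY : Y.PosSemidef) : X.det ≤ (X + Y).det := by
  set B := CFC.sqrt X with hBdef
  have hBpsd : B.PosSemidef := (CFC.sqrt_nonneg X).posSemidef
  have hBB : B * B = X := CFC.sqrt_mul_sqrt_self X hX.posSemidef.nonneg
  have hdet : B.det * B.det = X.det := by rw [← det_mul, hBB]
  have hBunit : IsUnit B.det := by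
    refine isUnit_iff_ne_zero.mpr (fun h => ?_)
    have := hX.det_pos
    rw [← hdet, h, mul_zero] at this
    exact lt_irrefl _ this
  have hBinv : B⁻¹.PosSemidef := hBpsd.inv
  have hM : (B⁻¹ * Y * B⁻¹).PosSemidef := by
    have h := hY.conjTranspose_mul_mul_same B⁻¹
    rwa [hBinv.isHermitian.eq] at h
  have key : X + Y = B * (1 + B⁻¹ * Y * B⁻¹) * B := by
    rw [mul_add, add_mul, mul_one, hBB]
    congr 1
    symm
    calc B * (B⁻¹ * Y * B⁻¹) * B
        = (B * B⁻¹) * Y * (B⁻¹ * B) := by noncomm_ring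
      _ = Y := by rw [mul_nonsing_inv _ hBunit, nonsing_inv_mul _ hBunit, one_mul, mul_one]
  rw [key, det_mul, det_mul, mul_right_comm, hdet]
  nlinarith [one_le_det_one_add' hM, hX.det_pos]

private lemma comm_nonsing_inv' {A B : Matrix (Fin m) (Fin m) ℝ} (h : IsUnit A.det)
    (hc : B * A = A * B) : B * A⁻¹ = A⁻¹ * B := by
  have h1 : A⁻¹ * (B * A) * A⁻¹ = A⁻¹ * (A * B) * A⁻¹ := by rw [hc]
  calc B * A⁻¹ = A⁻¹ * (A * B) * A⁻¹ := by
        rw [← Matrix.mul_assoc, nonsing_inv_mul _ h, one_mul]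
    _ = A⁻¹ * (B * A) * A⁻¹ := h1.symm
    _ = A⁻¹ * B * (A * A⁻¹) := by noncomm_ring
    _ = A⁻¹ * B := by rw [mul_nonsing_inv _ h, mul_one]

private lemma smul_comm_matrix' {C : Matrix (Fin m) (Fin m) ℝ} (a : ℝ) :
    C * (1 + a • C) = (1 + a • C) * C := by
  rw [mul_add, add_mul, mul_one, one_mul, Matrix.mul_smul, Matrix.smul_mul]

/-- `C * (1 + a • C)⁻¹` is PSD when `C` is PSD and `1 + a • C` is positive definite. -/
private lemma psd_mul_inv' {C : Matrix (Fin m) (Fin m) ℝ} (hC : C.PosSemidef) {a : ℝ}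
    (hA : (1 + a • C).PosDef) : (C * (1 + a • C)⁻¹).PosSemidef := by
  set A := 1 + a • C with hAdef
  set B := CFC.sqrt C with hBdef
  have hBpsd : B.PosSemidef := (CFC.sqrt_nonneg C).posSemidef
  have hBB : B * B = C := CFC.sqrt_mul_sqrt_self C hC.nonneg
  have hAdet : IsUnit A.det := isUnit_iff_ne_zero.mpr hA.det_pos.ne'
  have hBC : B * C = C * B := by rw [← hBB]; noncomm_ring
  have hBA : B * A = A * B := by
    rw [hAdef, mul_add, add_mul, mul_one, one_mul, Matrix.mul_smul, Matrix.smul_mul, hBC]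
  have hBAinv : B * A⁻¹ = A⁻¹ * B := comm_nonsing_inv' hAdet hBA
  have key : C * A⁻¹ = Bᴴ * A⁻¹ * B := by
    rw [hBpsd.isHermitian.eq]
    calc C * A⁻¹ = B * B * A⁻¹ := by rw [hBB]
      _ = B * (B * A⁻¹) := Matrix.mul_assoc _ _ _
      _ = B * (A⁻¹ * B) := by rw [hBAinv]
      _ = B * A⁻¹ * B := (Matrix.mul_assoc _ _ _).symm
  rw [key]
  exact hA.posSemidef.inv.conjTranspose_mul_mul_same B

end DetAux

/-- For positive semi-definite `C, Z` and `α, β ≥ 0` with `α + β = 1`,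
`det (Id + α C) * det (Id + β C + Z) ≥ det (Id + C) * det (Id + α Z)`. -/
theorem det_convex_split_ge {n : ℕ} (C Z : Matrix (Fin n) (Fin n) ℝ)
    (hC : C.PosSemidef) (hZ : Z.PosSemidef)
    (α β : ℝ) (hα : 0 ≤ α) (hβ : 0 ≤ β) (hαβ : α + β = 1) :
    (1 + C).det * (1 + α • Z).det ≤ (1 + α • C).det * (1 + β • C + Z).det := by
  obtain rfl : β = 1 - α := by linarith
  set A : Matrix (Fin n) (Fin n) ℝ := 1 + α • C with hAdef
  set Q : Matrix (Fin n) (Fin n) ℝ := 1 + α • Z with hQdef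
  have hA : A.PosDef := Matrix.PosDef.one.add_posSemidef (psd_smul' hC hα)
  have hQ : Q.PosDef := Matrix.PosDef.one.add_posSemidef (psd_smul' hZ hα)
  have hP : (1 + C).PosDef := Matrix.PosDef.one.add_posSemidef hC
  have hAdet : IsUnit A.det := isUnit_iff_ne_zero.mpr hA.det_pos.ne'
  have hQdet : IsUnit Q.det := isUnit_iff_ne_zero.mpr hQ.det_pos.ne'
  have hCA : C * A = A * C := smul_comm_matrix' α
  have hZQ : Z * Q = Q * Z := smul_comm_matrix' α
  have hCAinv : C * A⁻¹ = A⁻¹ * C := comm_nonsing_inv' hAdet hCA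
  have hZQinv : Z * Q⁻¹ = Q⁻¹ * Z := comm_nonsing_inv' hQdet hZQ
  have hCAinvPSD : (C * A⁻¹).PosSemidef := psd_mul_inv' hC hA
  have hWpsd : (Q⁻¹ * Z).PosSemidef := by rw [← hZQinv]; exact psd_mul_inv' hZ hQ
  -- the Schur-complement-style matrix `R`
  set R : Matrix (Fin n) (Fin n) ℝ := A⁻¹ + C * A⁻¹ + Z with hRdef
  have hR : R.PosDef := (hA.inv.add_posSemidef hCAinvPSD).add_posSemidef hZ
  set K : Matrix (Fin n) (Fin n) ℝ := C * A⁻¹ * C with hKdef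
  have hK : K.PosSemidef := by
    have h := hA.inv.posSemidef.conjTranspose_mul_mul_same C
    rwa [hC.isHermitian.eq] at h
  -- identity 1 : 1 + β•C + Z = R + (α*β) • K
  have E1 : (1 + (1 - α) • C) * A = 1 + C + (α * (1 - α)) • (C * C) := by
    rw [hAdef]
    simp only [Matrix.mul_add, Matrix.add_mul, Matrix.mul_smul, Matrix.smul_mul,
      mul_one, one_mul, smul_smul]
    module
  have E0 : (1 + C + (α * (1 - α)) • (C * C)) * A⁻¹ = 1 + (1 - α) • C := by
    rw [← E1, mul_nonsing_inv_cancel_right _ _ hAdet]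
  have hCCAinv : C * C * A⁻¹ = K := by
    rw [hKdef]
    calc C * C * A⁻¹ = C * (C * A⁻¹) := Matrix.mul_assoc _ _ _
      _ = C * (A⁻¹ * C) := by rw [hCAinv]
      _ = C * A⁻¹ * C := (Matrix.mul_assoc _ _ _).symm
  have identity1 : 1 + (1 - α) • C + Z = R + (α * (1 - α)) • K := by
    rw [hRdef, ← hCCAinv, ← E0]
    simp only [Matrix.add_mul, Matrix.smul_mul, one_mul]
    abel
  have ineq1 : R.det ≤ (1 + (1 - α) • C + Z).det := by
    rw [identity1]
    exact det_le_det_add' hR (psd_smul' hK (mul_nonneg hα hβ))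
  -- R * A = 1 + C + Z + α • (Z * C) = Q * (1 + C + β • (Q⁻¹ * Z))
  have T_eq : R * A = 1 + C + Z + α • (Z * C) := by
    rw [hRdef, add_mul, add_mul, nonsing_inv_mul _ hAdet,
      nonsing_inv_mul_cancel_right _ _ hAdet, hAdef, mul_add, mul_one, Matrix.mul_smul]
    abel
  have identity2 : Q * (1 + C + (1 - α) • (Q⁻¹ * Z)) = 1 + C + Z + α • (Z * C) := by
    have hQW : Q * (Q⁻¹ * Z) = Z := by
      rw [← Matrix.mul_assoc, mul_nonsing_inv _ hQdet, one_mul]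
    rw [mul_add, Matrix.mul_smul, hQW, hQdef]
    simp only [Matrix.mul_add, Matrix.add_mul, Matrix.mul_smul, Matrix.smul_mul,
      mul_one, one_mul]
    module
  have ineq2 : (1 + C).det ≤ (1 + C + (1 - α) • (Q⁻¹ * Z)).det :=
    det_le_det_add' hP (psd_smul' hWpsd hβ)
  calc (1 + C).det * Q.det
      ≤ (1 + C + (1 - α) • (Q⁻¹ * Z)).det * Q.det :=
        mul_le_mul_of_nonneg_right ineq2 hQ.det_pos.le
    _ = (Q * (1 + C + (1 - α) • (Q⁻¹ * Z))).det := by rw [det_mul, mul_comm]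
    _ = (R * A).det := by rw [identity2, T_eq]
    _ = R.det * A.det := det_mul _ _
    _ ≤ (1 + (1 - α) • C + Z).det * A.det :=
        mul_le_mul_of_nonneg_right ineq1 hA.det_pos.le
    _ = A.det * (1 + (1 - α) • C + Z).det := mul_comm _ _
end

section
/- Let C, Z be positive semi-definite n×n matrices, α ∈ (0,1), β = 1 − α. If det(Id + αC) · det(Id + βC + Z) = det(Id + C) · det(Id + αZ), then C = 0 and Z = 0. -/
open Matrix

section Aux

variable {m : Type*} [Fintype m] [DecidableEq m]

/-- nonnegative scalar multiple of a PSD matrix is PSD -/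
lemma aux_smulPSD {W : Matrix m m ℝ} (hW : W.PosSemidef) {s : ℝ} (hs : 0 ≤ s) :
    (s • W).PosSemidef := by
  refine Matrix.PosSemidef.of_dotProduct_mulVec_nonneg ?_ ?_
  · unfold Matrix.IsHermitian
    rw [conjTranspose_smul, hW.1, star_trivial]
  · intro x
    rw [smul_mulVec, dotProduct_smul, smul_eq_mul]
    exact mul_nonneg hs (hW.dotProduct_mulVec_nonneg x)

lemma aux_eq_zero_of_mulVec {P : Matrix m m ℝ} (h : ∀ x, P *ᵥ x = 0) : P = 0 := by
  ext i j
  have := congrFun (h (Pi.single j 1)) i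
  simpa using this

lemma aux_psd_add_eq_zero {P Q : Matrix m m ℝ} (hP : P.PosSemidef) (hQ : Q.PosSemidef)
    (h : P + Q = 0) : P = 0 ∧ Q = 0 := by
  have hPz : P = 0 := by
    apply aux_eq_zero_of_mulVec
    intro x
    apply (hP.dotProduct_mulVec_zero_iff x).mp
    have hsum : star x ⬝ᵥ P *ᵥ x + star x ⬝ᵥ Q *ᵥ x = 0 := by
      rw [← dotProduct_add, ← add_mulVec, h, zero_mulVec, dotProduct_zero]
    have h1 := hP.dotProduct_mulVec_nonneg x
    have h2 := hQ.dotProduct_mulVec_nonneg x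
    linarith
  refine ⟨hPz, ?_⟩
  rw [hPz, zero_add] at h
  exact h

/-- spectral theorem over the reals, without `RCLike.ofReal` coercions -/
lemma aux_real_spectral {A : Matrix m m ℝ} (hA : A.IsHermitian) :
    A = (hA.eigenvectorUnitary : Matrix m m ℝ) * diagonal hA.eigenvalues *
      (star hA.eigenvectorUnitary : Matrix m m ℝ) := by
  have h := hA.spectral_theorem
  rwa [RCLike.ofReal_real_eq_id, Function.id_comp] at h

/-- a PSD matrix with `det (1 + K) = 1` is zero -/
lemma aux_det_one_add_psd {K : Matrix m m ℝ} (hK : K.PosSemidef)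
    (h : ((1 : Matrix m m ℝ) + K).det = 1) : K = 0 := by
  have hH := hK.1
  set U : Matrix m m ℝ := (hH.eigenvectorUnitary : Matrix m m ℝ) with hU_def
  have hUs : U * star U = 1 := mem_unitaryGroup_iff.mp hH.eigenvectorUnitary.2
  set κ := hH.eigenvalues with hκ_def
  have hsp : K = U * diagonal κ * star U := aux_real_spectral hH
  have h1K : (1 : Matrix m m ℝ) + K = U * diagonal (fun i => 1 + κ i) * star U := by
    have hd : diagonal (fun i => 1 + κ i) = 1 + diagonal κ := by
      rw [← diagonal_one, ← diagonal_add]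
    rw [hd, mul_add, add_mul, mul_one, hUs, ← hsp]
  have hdetU : U.det * (star U).det = 1 := by rw [← det_mul, hUs, det_one]
  have hprod : ∏ i, (1 + κ i) = 1 := by
    have h2 : U.det * (∏ i, (1 + κ i)) * (star U).det = 1 := by
      rw [← det_diagonal, ← det_mul, ← det_mul, ← h1K, h]
    calc ∏ i, (1 + κ i) = (U.det * (star U).det) * ∏ i, (1 + κ i) := by
            rw [hdetU, one_mul]
      _ = U.det * (∏ i, (1 + κ i)) * (star U).det := by ring
      _ = 1 := h2
  have hκ0 : ∀ i, κ i = 0 := by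
    intro i
    have hnn : ∀ j, (0 : ℝ) ≤ κ j := hK.eigenvalues_nonneg
    have herase : (1 : ℝ) ≤ ∏ j ∈ Finset.univ.erase i, (1 + κ j) :=
      calc (1 : ℝ) = ∏ _j ∈ Finset.univ.erase i, (1 : ℝ) := Finset.prod_const_one.symm
        _ ≤ ∏ j ∈ Finset.univ.erase i, (1 + κ j) :=
            Finset.prod_le_prod (fun j _ => zero_le_one)
              (fun j _ => by have := hnn j; linarith)
    have hsplit : (1 + κ i) * ∏ j ∈ Finset.univ.erase i, (1 + κ j) = ∏ j, (1 + κ j) := by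
      simpa using Finset.mul_prod_erase Finset.univ (fun j => (1 : ℝ) + κ j) (Finset.mem_univ i)
    have hle : (1 : ℝ) + κ i ≤ ∏ j, (1 + κ j) := by
      calc (1 : ℝ) + κ i = (1 + κ i) * 1 := by ring
        _ ≤ (1 + κ i) * ∏ j ∈ Finset.univ.erase i, (1 + κ j) :=
            mul_le_mul_of_nonneg_left herase (by have := hnn i; linarith)
        _ = ∏ j, (1 + κ j) := hsplit
    have := hnn i
    rw [hprod] at hle
    linarith
  have hκz : κ = fun _ => (0 : ℝ) := funext hκ0
  rw [hsp, hκz]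
  simp

/-- if `Y` is PSD with nonzero determinant, `Q` is PSD, and `det (Y + Q) = det Y`, then `Q = 0` -/
lemma aux_det_add_psd_eq {Y Q : Matrix m m ℝ} (hY : Y.PosSemidef) (hQ : Q.PosSemidef)
    (hdY : Y.det ≠ 0) (h : (Y + Q).det = Y.det) : Q = 0 := by
  open scoped MatrixOrder in set R := CFC.sqrt Y with hR_def
  open scoped MatrixOrder in have hRR : R * R = Y := CFC.sqrt_mul_sqrt_self Y hY.nonneg
  open scoped MatrixOrder in have hRpsd : R.PosSemidef := (CFC.sqrt_nonneg Y).posSemidef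
  have hdetR : R.det * R.det = Y.det := by rw [← det_mul, hRR]
  have hdR : R.det ≠ 0 := by
    intro h0
    rw [h0, mul_zero] at hdetR
    exact hdY hdetR.symm
  have hUnit : IsUnit R.det := isUnit_iff_ne_zero.mpr hdR
  have hRV : R * R⁻¹ = 1 := mul_nonsing_inv R hUnit
  have hVR : R⁻¹ * R = 1 := nonsing_inv_mul R hUnit
  have hVsym : (R⁻¹)ᴴ = R⁻¹ := by rw [conjTranspose_nonsing_inv, hRpsd.1.eq]
  set K := R⁻¹ * Q * R⁻¹ with hK_def
  have hKpsd : K.PosSemidef := by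
    have := hQ.conjTranspose_mul_mul_same (R⁻¹)
    rwa [hVsym] at this
  have hQK : R * K * R = Q := by
    rw [hK_def]
    calc R * (R⁻¹ * Q * R⁻¹) * R = ((R * R⁻¹) * Q) * (R⁻¹ * R) := by noncomm_ring
      _ = Q := by rw [hRV, hVR, one_mul, mul_one]
  have hYQ : Y + Q = R * ((1 : Matrix m m ℝ) + K) * R := by
    rw [mul_add, add_mul, mul_one, hRR, hQK]
  have hdet1 : ((1 : Matrix m m ℝ) + K).det = 1 := by
    have h2 : R.det * ((1 : Matrix m m ℝ) + K).det * R.det = R.det * R.det := by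
      rw [← det_mul, ← det_mul, ← hYQ, h, ← hdetR]
    have h3 : R.det * R.det * ((1 : Matrix m m ℝ) + K).det = R.det * R.det * 1 := by
      linear_combination h2
    exact mul_left_cancel₀ (mul_ne_zero hdR hdR) h3
  have hK0 : K = 0 := aux_det_one_add_psd hKpsd hdet1
  rw [← hQK, hK0, mul_zero, zero_mul]

/-- existence of a symmetric square root `G` of `1 + W` with `G ⪰ 1`. -/
lemma aux_exists_sqrt_one_add {W : Matrix m m ℝ} (hW : W.PosSemidef) :
    ∃ G : Matrix m m ℝ, G.IsHermitian ∧ (G - 1).PosSemidef ∧ G * G = 1 + W := by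
  have hH := hW.1
  set U : Matrix m m ℝ := (hH.eigenvectorUnitary : Matrix m m ℝ) with hU_def
  have hUs : U * star U = 1 := mem_unitaryGroup_iff.mp hH.eigenvectorUnitary.2
  have hsU : star U * U = 1 := mem_unitaryGroup_iff'.mp hH.eigenvectorUnitary.2
  set w := hH.eigenvalues with hw_def
  have hsp : W = U * diagonal w * star U := aux_real_spectral hH
  set g : m → ℝ := fun i => Real.sqrt (1 + w i) with hg_def
  have hg1 : ∀ i, 1 ≤ g i := by
    intro i
    rw [hg_def]
    have := hW.eigenvalues_nonneg i
    exact Real.one_le_sqrt.mpr (by linarith)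
  refine ⟨U * diagonal g * star U, ?_, ?_, ?_⟩
  · rw [show (star U : Matrix m m ℝ) = Uᴴ from rfl]
    exact isHermitian_mul_mul_conjTranspose U (isHermitian_diagonal g)
  · have hform : U * diagonal g * star U - 1 = U * diagonal (fun i => g i - 1) * star U := by
      have hd : diagonal (fun i => g i - 1) = diagonal g - 1 := by
        rw [← diagonal_one, ← diagonal_sub]
      rw [hd, mul_sub, sub_mul, mul_one, hUs]
    rw [hform]
    have hpsd : (diagonal (fun i => g i - 1)).PosSemidef :=
      posSemidef_diagonal_iff.mpr (fun i => by have := hg1 i; linarith)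
    have := hpsd.mul_mul_conjTranspose_same U
    rwa [show (Uᴴ : Matrix m m ℝ) = star U from rfl] at this
  · have hassoc : (U * diagonal g * star U) * (U * diagonal g * star U)
        = U * (diagonal g * (star U * U) * diagonal g) * star U := by noncomm_ring
    rw [hassoc, hsU, mul_one, diagonal_mul_diagonal]
    have hgg : (fun i => g i * g i) = fun i => 1 + w i := by
      funext i
      rw [hg_def]
      exact Real.mul_self_sqrt (by have := hW.eigenvalues_nonneg i; linarith)
    rw [hgg, show (diagonal (fun i => 1 + w i) : Matrix m m ℝ) = 1 + diagonal w by
      rw [← diagonal_one, ← diagonal_add]]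
    rw [mul_add, add_mul, mul_one, hUs, ← hsp]

end Aux

/-- Equality case: for positive semi-definite `C, Z` and `α ∈ (0,1)`, `β = 1 - α`,
equality `det (Id + α C) * det (Id + β C + Z) = det (Id + C) * det (Id + α Z)`
forces `C = 0` and `Z = 0`. -/
theorem det_convex_split_eq_iff {n : ℕ} (C Z : Matrix (Fin n) (Fin n) ℝ)
    (hC : C.PosSemidef) (hZ : Z.PosSemidef)
    (α β : ℝ) (hα0 : 0 < α) (hα1 : α < 1) (hβ : β = 1 - α)
    (heq : (1 + α • C).det * (1 + β • C + Z).det = (1 + C).det * (1 + α • Z).det) :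
    C = 0 ∧ Z = 0 := by
  subst hβ
  have hαne : α ≠ 0 := hα0.ne'
  have hβpos : (0 : ℝ) < 1 - α := by linarith
  -- square root G of 1 + α • Z with G ⪰ 1
  obtain ⟨G, hGh, hG1, hGG⟩ := aux_exists_sqrt_one_add (aux_smulPSD hZ hα0.le)
  set A : Matrix (Fin n) (Fin n) ℝ := 1 + α • C with hA_def
  have hApd : A.PosDef := Matrix.PosDef.one.add_posSemidef (aux_smulPSD hC hα0.le)
  have hAdet : IsUnit A.det := isUnit_iff_ne_zero.mpr hApd.det_pos.ne'
  have hAV : A * A⁻¹ = 1 := mul_nonsing_inv A hAdet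
  have hVA : A⁻¹ * A = 1 := nonsing_inv_mul A hAdet
  have hVpd : (A⁻¹).PosDef := hApd.inv
  have hBpd : ((1 : Matrix (Fin n) (Fin n) ℝ) + α • Z).PosDef :=
    Matrix.PosDef.one.add_posSemidef (aux_smulPSD hZ hα0.le)
  have hDpd : ((1 : Matrix (Fin n) (Fin n) ℝ) + C).PosDef :=
    Matrix.PosDef.one.add_posSemidef hC
  -- algebraic preliminaries
  have e1 : (G - A) * A⁻¹ * (G - A) = G * A⁻¹ * G - G - G + A := by
    have h : (G - A) * A⁻¹ * (G - A)
        = G * A⁻¹ * G - G * (A⁻¹ * A) - A * A⁻¹ * G + A * A⁻¹ * A := by noncomm_ring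
    rw [hVA, hAV, mul_one, one_mul, one_mul] at h
    exact h
  have e2 : ((1 : Matrix (Fin n) (Fin n) ℝ) + C) * A⁻¹
      = α⁻¹ • (1 : Matrix (Fin n) (Fin n) ℝ) + (1 - α⁻¹) • A⁻¹ := by
    have h1 : ((1 : Matrix (Fin n) (Fin n) ℝ) + C)
        = α⁻¹ • A + (1 - α⁻¹) • (1 : Matrix (Fin n) (Fin n) ℝ) := by
      rw [hA_def]
      match_scalars <;> field_simp <;> ring
    rw [h1, add_mul, smul_mul_assoc, smul_mul_assoc, hAV, one_mul]
  -- PSD of N := (1 + C) * A⁻¹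
  have hACeq : α • C = A - 1 := by rw [hA_def]; abel
  have hMpsd : ((1 : Matrix (Fin n) (Fin n) ℝ) - A⁻¹).PosSemidef := by
    have hVh : (A⁻¹)ᴴ = A⁻¹ := hVpd.1.eq
    have h2 : ((1 : Matrix (Fin n) (Fin n) ℝ) - A⁻¹)ᴴ * ((1 : Matrix (Fin n) (Fin n) ℝ) - A⁻¹)
        + (A⁻¹)ᴴ * (α • C) * A⁻¹ = 1 - A⁻¹ := by
      rw [conjTranspose_sub, conjTranspose_one, hVh, hACeq]
      have hx : A⁻¹ * (A - 1) * A⁻¹ = A⁻¹ * A * A⁻¹ - A⁻¹ * A⁻¹ := by noncomm_ring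
      rw [hx, hVA, one_mul]
      noncomm_ring
    rw [← h2]
    exact (posSemidef_conjTranspose_mul_self _).add
      ((aux_smulPSD hC hα0.le).conjTranspose_mul_mul_same _)
  have hNpsd : (((1 : Matrix (Fin n) (Fin n) ℝ) + C) * A⁻¹).PosSemidef := by
    have hform : ((1 : Matrix (Fin n) (Fin n) ℝ) + C) * A⁻¹
        = 1 + ((1 - α) / α) • ((1 : Matrix (Fin n) (Fin n) ℝ) - A⁻¹) := by
      rw [e2]
      match_scalars <;> field_simp <;> ring
    rw [hform]
    exact (Matrix.PosDef.one.add_posSemidef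
      (aux_smulPSD hMpsd (by positivity))).posSemidef
  -- Y := G * N * G is PSD
  have hYpsd : (G * (((1 : Matrix (Fin n) (Fin n) ℝ) + C) * A⁻¹) * G).PosSemidef := by
    have := hNpsd.mul_mul_conjTranspose_same G
    rwa [hGh.eq] at this
  -- the key algebraic identity
  have hkey : (1 : Matrix (Fin n) (Fin n) ℝ) + (1 - α) • C + Z
      = G * (((1 : Matrix (Fin n) (Fin n) ℝ) + C) * A⁻¹) * G
        + ((1 - α) / α) • ((G - A) * A⁻¹ * (G - A) + (2 : ℝ) • (G - 1)) := by
    rw [e1, e2]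
    rw [mul_add, add_mul, mul_smul_comm, mul_smul_comm, smul_mul_assoc, smul_mul_assoc, mul_one]
    rw [hGG, hA_def]
    match_scalars
    all_goals try field_simp
    all_goals try ring
    all_goals simp
  -- determinant bookkeeping
  have hdetG : G.det * G.det = ((1 : Matrix (Fin n) (Fin n) ℝ) + α • Z).det := by
    rw [← det_mul, hGG]
  have hdGne : G.det ≠ 0 := by
    intro h0
    rw [h0, mul_zero] at hdetG
    exact hBpd.det_pos.ne' hdetG.symm
  have hNA : (((1 : Matrix (Fin n) (Fin n) ℝ) + C) * A⁻¹) * A = 1 + C := by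
    rw [mul_assoc, hVA, mul_one]
  have hdetN : (((1 : Matrix (Fin n) (Fin n) ℝ) + C) * A⁻¹).det * A.det
      = ((1 : Matrix (Fin n) (Fin n) ℝ) + C).det := by
    rw [← det_mul, hNA]
  have hdNne : (((1 : Matrix (Fin n) (Fin n) ℝ) + C) * A⁻¹).det ≠ 0 := by
    intro h0
    rw [h0, zero_mul] at hdetN
    exact hDpd.det_pos.ne' hdetN.symm
  have hdetY : (G * (((1 : Matrix (Fin n) (Fin n) ℝ) + C) * A⁻¹) * G).det
      = G.det * (((1 : Matrix (Fin n) (Fin n) ℝ) + C) * A⁻¹).det * G.det := by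
    rw [det_mul, det_mul]
  have hdYne : (G * (((1 : Matrix (Fin n) (Fin n) ℝ) + C) * A⁻¹) * G).det ≠ 0 := by
    rw [hdetY]
    exact mul_ne_zero (mul_ne_zero hdGne hdNne) hdGne
  have hcancel : A.det * ((1 : Matrix (Fin n) (Fin n) ℝ) + (1 - α) • C + Z).det
      = A.det * (G * (((1 : Matrix (Fin n) (Fin n) ℝ) + C) * A⁻¹) * G).det := by
    rw [heq, hdetY, ← hdetN, ← hdetG]
    ring
  have hSY : ((1 : Matrix (Fin n) (Fin n) ℝ) + (1 - α) • C + Z).det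
      = (G * (((1 : Matrix (Fin n) (Fin n) ℝ) + C) * A⁻¹) * G).det :=
    mul_left_cancel₀ hApd.det_pos.ne' hcancel
  -- PSD of the correction term
  have hTpsd : ((G - A) * A⁻¹ * (G - A)).PosSemidef := by
    have := hVpd.posSemidef.conjTranspose_mul_mul_same (G - A)
    rwa [conjTranspose_sub, hGh.eq, hApd.1.eq] at this
  have hQinpsd : ((G - A) * A⁻¹ * (G - A) + (2 : ℝ) • (G - 1)).PosSemidef :=
    hTpsd.add (aux_smulPSD hG1 (by norm_num))
  have hQmpsd : (((1 - α) / α) • ((G - A) * A⁻¹ * (G - A) + (2 : ℝ) • (G - 1))).PosSemidef :=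
    aux_smulPSD hQinpsd (by positivity)
  -- apply the determinant equality lemma
  have hQm0 : ((1 - α) / α) • ((G - A) * A⁻¹ * (G - A) + (2 : ℝ) • (G - 1)) = 0 := by
    apply aux_det_add_psd_eq hYpsd hQmpsd hdYne
    rw [← hkey, hSY]
  have hQin0 : (G - A) * A⁻¹ * (G - A) + (2 : ℝ) • (G - 1) = 0 := by
    rcases smul_eq_zero.mp hQm0 with h | h
    · exact absurd h (by positivity)
    · exact h
  obtain ⟨hT0, hG10⟩ := aux_psd_add_eq_zero hTpsd (aux_smulPSD hG1 (by norm_num)) hQin0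
  -- conclude G = 1, hence Z = 0
  have hGone : G = 1 := by
    rcases smul_eq_zero.mp hG10 with h | h
    · norm_num at h
    · exact sub_eq_zero.mp h
  have hZ0 : Z = 0 := by
    have h1 : (1 : Matrix (Fin n) (Fin n) ℝ) = 1 + α • Z := by
      rw [← hGG, hGone, mul_one]
    have h2 : α • Z = 0 := (left_eq_add.mp h1).symm ▸ rfl
    rcases smul_eq_zero.mp h2 with h | h
    · exact absurd h hαne
    · exact h
  -- conclude C = 0
  have hT0' : (α • C) * A⁻¹ * (α • C) = 0 := by
    have h1 : (1 : Matrix (Fin n) (Fin n) ℝ) - A = -(α • C) := by rw [hA_def]; abel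
    have h2 := hT0
    rw [hGone, h1] at h2
    rwa [neg_mul, neg_mul, mul_neg, neg_neg] at h2
  have hCVC : C * A⁻¹ * C = 0 := by
    have h1 : (α • C) * A⁻¹ * (α • C) = (α * α) • (C * A⁻¹ * C) := by
      rw [smul_mul_assoc, smul_mul_assoc, mul_smul_comm, smul_smul]
    rw [h1] at hT0'
    rcases smul_eq_zero.mp hT0' with h | h
    · exact absurd h (by positivity)
    · exact h
  have hC0 : C = 0 := by
    apply aux_eq_zero_of_mulVec
    intro x
    have h7 : star (C *ᵥ x) ⬝ᵥ A⁻¹ *ᵥ (C *ᵥ x) = 0 := by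
      have hform : star (C *ᵥ x) ⬝ᵥ A⁻¹ *ᵥ (C *ᵥ x) = star x ⬝ᵥ (Cᴴ * A⁻¹ * C) *ᵥ x := by
        simp only [star_mulVec, dotProduct_mulVec, vecMul_vecMul]
      rw [hform, hC.1.eq, hCVC, zero_mulVec, dotProduct_zero]
    have h8 : A⁻¹ *ᵥ (C *ᵥ x) = 0 :=
      (hVpd.posSemidef.dotProduct_mulVec_zero_iff _).mp h7
    have h9 : C *ᵥ x = A *ᵥ (A⁻¹ *ᵥ (C *ᵥ x)) := by
      rw [mulVec_mulVec, hAV, one_mulVec]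
    rw [h9, h8, mulVec_zero]
  exact ⟨hC0, hZ0⟩
end

section
/- Let A₁, A₂, C be positive semi-definite n×n matrices and B = [[B₁, B₂],[B₂*, B₄]] a positive semi-definite 2n×2n matrix, and let a, b be real numbers with |a| ≥ 1, |b| ≥ 1 and |a+b| ≥ 1. If diag(A₁, A₂) ≥ B + [[a²C, abC],[abC, b²C]] in the Loewner order, then det(Id + A₁)·det(Id + A₂) ≥ det(Id + C)·det(Id + B̄ + ((a+b)² − 1)C), where B̄ = B₁ + B₂ + B₂* + B₄. In particular det(Id + A₁)·det(Id + A₂) ≥ det(Id + C)·det(Id + B̄). -/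
open Matrix

namespace GCRSIAux

open scoped MatrixOrder

variable {n : ℕ}

lemma smul_psd {C : Matrix (Fin n) (Fin n) ℝ} (hC : C.PosSemidef) {c : ℝ} (hc : 0 ≤ c) :
    (c • C).PosSemidef := by
  refine ⟨?_, fun x => ?_⟩
  · rw [Matrix.IsHermitian, conjTranspose_smul, star_trivial, hC.1]
  · have h := hC.2 x
    exact (hC.smul hc).2 x

lemma block₁₁ {M₁ M₂ M₃ M₄ : Matrix (Fin n) (Fin n) ℝ}
    (h : (fromBlocks M₁ M₂ M₃ M₄).PosSemidef) : M₁.PosSemidef := by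
  have h2 := h.submatrix (Sum.inl : Fin n → Fin n ⊕ Fin n)
  have e : (fromBlocks M₁ M₂ M₃ M₄).submatrix Sum.inl Sum.inl = M₁ := by
    ext i j; rfl
  rwa [e] at h2

lemma block₂₂ {M₁ M₂ M₃ M₄ : Matrix (Fin n) (Fin n) ℝ}
    (h : (fromBlocks M₁ M₂ M₃ M₄).PosSemidef) : M₄.PosSemidef := by
  have h2 := h.submatrix (Sum.inr : Fin n → Fin n ⊕ Fin n)
  have e : (fromBlocks M₁ M₂ M₃ M₄).submatrix Sum.inr Sum.inr = M₄ := by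
    ext i j; rfl
  rwa [e] at h2

lemma sum_blocks_psd {M₁ M₂ M₃ M₄ : Matrix (Fin n) (Fin n) ℝ}
    (h : (fromBlocks M₁ M₂ M₃ M₄).PosSemidef) : (M₁ + M₂ + M₃ + M₄).PosSemidef := by
  have h2 := h.conjTranspose_mul_mul_same
    (fromBlocks 1 0 1 0 : Matrix (Fin n ⊕ Fin n) (Fin n ⊕ Fin n) ℝ)
  have e : (fromBlocks (1 : Matrix (Fin n) (Fin n) ℝ) 0 1 0)ᴴ * fromBlocks M₁ M₂ M₃ M₄ *
      fromBlocks 1 0 1 0 = fromBlocks (M₁ + M₂ + M₃ + M₄) 0 0 0 := by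
    rw [fromBlocks_conjTranspose, fromBlocks_multiply, fromBlocks_multiply]
    congr 1 <;> simp <;> abel
  rw [e] at h2
  exact block₁₁ h2

lemma one_le_det_one_add {R : Matrix (Fin n) (Fin n) ℝ} (hR : R.PosSemidef) :
    1 ≤ (1 + R).det := by
  have hH := hR.1
  have hspec := hH.spectral_theorem
  set U : Matrix (Fin n) (Fin n) ℝ := (hH.eigenvectorUnitary : Matrix (Fin n) (Fin n) ℝ) with hU
  have hUU : U * star U = 1 := Unitary.mul_star_self_of_mem hH.eigenvectorUnitary.2
  have hUU2 : star U * U = 1 := Unitary.star_mul_self_of_mem hH.eigenvectorUnitary.2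
  have e : 1 + R = U * (1 + diagonal (RCLike.ofReal ∘ hH.eigenvalues)) * star U := by
    rw [Matrix.mul_add, Matrix.mul_one, Matrix.add_mul, hUU]
    exact congrArg (1 + ·) hspec
  rw [e, det_mul, det_mul, mul_comm, ← mul_assoc, ← det_mul, hUU2, det_one, one_mul]
  have : (1 : Matrix (Fin n) (Fin n) ℝ) + diagonal (RCLike.ofReal ∘ hH.eigenvalues) =
      diagonal (fun i => 1 + hH.eigenvalues i) := by
    rw [← diagonal_one, diagonal_add]
    rfl
  rw [this, det_diagonal]
  have h : ∀ i ∈ Finset.univ, (1:ℝ) ≤ 1 + hH.eigenvalues i := fun i _ => by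
    linarith [hR.eigenvalues_nonneg i]
  calc (1:ℝ) = ∏ _i : Fin n, 1 := by simp
    _ ≤ ∏ i, (1 + hH.eigenvalues i) := Finset.prod_le_prod (by intros; norm_num) h

lemma det_mono {A P : Matrix (Fin n) (Fin n) ℝ} (hA : A.PosDef) (hP : P.PosSemidef) :
    A.det ≤ (A + P).det := by
  set S := CFC.sqrt A with hSdef
  have hS2 : S * S = A := CFC.sqrt_mul_sqrt_self A hA.posSemidef.nonneg
  have hSps : S.PosSemidef := (CFC.sqrt_nonneg A).posSemidef
  have hdet : S.det * S.det = A.det := by rw [← det_mul, hS2]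
  have hSd : IsUnit S.det := by
    refine isUnit_iff_ne_zero.2 fun h => ?_
    rw [h, mul_zero] at hdet
    exact absurd hdet.symm (ne_of_gt hA.det_pos)
  have hSinv : S * S⁻¹ = 1 := mul_nonsing_inv _ hSd
  have hSinv' : S⁻¹ * S = 1 := nonsing_inv_mul _ hSd
  have hSHerm : S⁻¹ᴴ = S⁻¹ := by rw [conjTranspose_nonsing_inv, hSps.1]
  have hRps : (S⁻¹ * P * S⁻¹).PosSemidef := by
    have := hP.conjTranspose_mul_mul_same S⁻¹
    rwa [hSHerm] at this
  have e : A + P = S * (1 + S⁻¹ * P * S⁻¹) * S := by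
    rw [Matrix.mul_add, Matrix.mul_one, Matrix.add_mul, hS2]
    congr 1
    simp only [Matrix.mul_assoc, hSinv']
    rw [Matrix.mul_one, ← Matrix.mul_assoc, hSinv, Matrix.one_mul]
  rw [e, det_mul, det_mul]
  have h1 : 1 ≤ (1 + S⁻¹ * P * S⁻¹).det := one_le_det_one_add hRps
  calc A.det = S.det * 1 * S.det := by rw [mul_one, hdet]
    _ ≤ S.det * (1 + S⁻¹ * P * S⁻¹).det * S.det := by
        have hS0 : 0 < S.det * S.det := hdet ▸ hA.det_pos
        nlinarith
    _ = _ := rfl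

/-- log-supermodularity of determinant: `det D * det (D+X+Y) ≤ det (D+X) * det (D+Y)`. -/
lemma supermod {D X Y : Matrix (Fin n) (Fin n) ℝ} (hD : D.PosDef) (hX : X.PosSemidef)
    (hY : Y.PosSemidef) : D.det * (D + X + Y).det ≤ (D + X).det * (D + Y).det := by
  set M := D + X with hMdef
  have hM : M.PosDef := hD.add_posSemidef hX
  have hMu : IsUnit M.det := isUnit_iff_ne_zero.2 (ne_of_gt hM.det_pos)
  have hDu : IsUnit D.det := isUnit_iff_ne_zero.2 (ne_of_gt hD.det_pos)
  set W := M⁻¹ with hWdef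
  set E := D⁻¹ with hEdef
  have hW : W.PosDef := hM.inv
  have hE : E.PosDef := hD.inv
  have hMW : M * W = 1 := mul_nonsing_inv _ hMu
  have hWM : W * M = 1 := nonsing_inv_mul _ hMu
  have hDE : D * E = 1 := mul_nonsing_inv _ hDu
  have hED : E * D = 1 := nonsing_inv_mul _ hDu
  have hWH : Wᴴ = W := hW.isHermitian
  have hEH : Eᴴ = E := hE.isHermitian
  have hXH : Xᴴ = X := hX.1
  set T := CFC.sqrt Y with hTdef
  have hT2 : T * T = Y := CFC.sqrt_mul_sqrt_self Y hY.nonneg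
  have hTps : T.PosSemidef := (CFC.sqrt_nonneg Y).posSemidef
  have hTH : Tᴴ = T := hTps.1
  -- det (D + X + Y) = det M * det (1 + T*W*T)
  have e1 : D + X + Y = M * (1 + W * (T * T)) := by
    rw [Matrix.mul_add, Matrix.mul_one, ← Matrix.mul_assoc, hMW, Matrix.one_mul, hT2]
  have d1 : (D + X + Y).det = M.det * (1 + T * W * T).det := by
    rw [e1, det_mul]
    congr 1
    rw [show W * (T * T) = (W * T) * T from by rw [Matrix.mul_assoc],
      det_one_add_mul_comm, Matrix.mul_assoc, ← Matrix.mul_assoc]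
  -- det (D + Y) = det D * det (1 + T*E*T)
  have e2 : D + Y = D * (1 + E * (T * T)) := by
    rw [Matrix.mul_add, Matrix.mul_one, ← Matrix.mul_assoc, hDE, Matrix.one_mul, hT2]
  have d2 : (D + Y).det = D.det * (1 + T * E * T).det := by
    rw [e2, det_mul]
    congr 1
    rw [show E * (T * T) = (E * T) * T from by rw [Matrix.mul_assoc],
      det_one_add_mul_comm, Matrix.mul_assoc, ← Matrix.mul_assoc]
  -- E - W is PSD
  set N := X + X * E * X with hNdef
  have hNps : N.PosSemidef := by
    refine hX.add ?_
    have := hE.posSemidef.conjTranspose_mul_mul_same X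
    rwa [hXH] at this
  have step1 : E * M = 1 + E * X := by rw [hMdef, Matrix.mul_add, hED]
  have step2 : M * E * M = D + X + (X + X * E * X) := by
    rw [Matrix.mul_assoc, step1, Matrix.mul_add, Matrix.mul_one]
    rw [show M * (E * X) = M * E * X from by rw [Matrix.mul_assoc]]
    rw [hMdef, Matrix.add_mul D X E, Matrix.add_mul, hDE, Matrix.one_mul]
  have key : M * (E - W) * M = N := by
    have e0 : M * (E - W) * M = M * E * M - M := by
      rw [Matrix.mul_sub, Matrix.sub_mul, Matrix.mul_assoc M W M, hWM, Matrix.mul_one]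
    rw [e0, step2, hNdef, hMdef]
    abel
  have hEW : (E - W).PosSemidef := by
    have h2 : (Wᴴ * N * W).PosSemidef := hNps.conjTranspose_mul_mul_same W
    rw [hWH] at h2
    have e3 : W * N * W = E - W := by
      rw [← key]
      calc W * (M * (E - W) * M) * W = (W * M) * (E - W) * (M * W) := by
            simp only [Matrix.mul_assoc]
        _ = E - W := by rw [hWM, hMW, Matrix.one_mul, Matrix.mul_one]
    rwa [e3] at h2
  -- 1 + T*W*T ≤det 1 + T*E*T
  have hTWT : (T * W * T).PosSemidef := by
    have := hW.posSemidef.conjTranspose_mul_mul_same T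
    rwa [hTH] at this
  have hTdiff : (T * E * T - T * W * T).PosSemidef := by
    have h2 := hEW.conjTranspose_mul_mul_same T
    rw [hTH] at h2
    have e4 : T * (E - W) * T = T * E * T - T * W * T := by
      rw [Matrix.mul_sub, Matrix.sub_mul]
    rwa [e4] at h2
  have hmono : (1 + T * W * T).det ≤ (1 + T * E * T).det := by
    have h := det_mono (Matrix.PosDef.one.add_posSemidef hTWT) hTdiff
    have e5 : 1 + T * W * T + (T * E * T - T * W * T) = 1 + T * E * T := by abel
    rwa [e5] at h
  -- combine
  have hMd : 0 < M.det := hM.det_pos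
  have hDd : 0 < D.det := hD.det_pos
  calc D.det * (D + X + Y).det = M.det * (D.det * (1 + T * W * T).det) := by rw [d1]; ring
    _ ≤ M.det * (D.det * (1 + T * E * T).det) := by
        have := mul_le_mul_of_nonneg_left hmono hDd.le
        exact mul_le_mul_of_nonneg_left this hMd.le
    _ = (D + X).det * (D + Y).det := by rw [d2, hMdef]

end GCRSIAux

open GCRSIAux

/-- Gaussian saturation in the GCRSI: if `diag (A₁, A₂) ≥ B + [[a²C, abC],[abC, b²C]]`
with `A₁, A₂, C ≥ 0`, `B ≥ 0` (in `n × n` blocks `B₁, B₂, B₂ᵀ, B₄`) and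
`|a|, |b|, |a+b| ≥ 1`, then, with `B̄ = B₁ + B₂ + B₂ᵀ + B₄`,
`det (Id + A₁) det (Id + A₂) ≥ det (Id + C) det (Id + B̄ + ((a+b)² - 1) C)`, and in particular
`det (Id + A₁) det (Id + A₂) ≥ det (Id + C) det (Id + B̄)`. -/
theorem gaussian_GCRSI {n : ℕ} (A₁ A₂ C B₁ B₂ B₄ : Matrix (Fin n) (Fin n) ℝ)
    (hA₁ : A₁.PosSemidef) (hA₂ : A₂.PosSemidef) (hC : C.PosSemidef)
    (hB : (Matrix.fromBlocks B₁ B₂ B₂ᵀ B₄).PosSemidef)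
    (a b : ℝ) (ha : 1 ≤ |a|) (hb : 1 ≤ |b|) (hab : 1 ≤ |a + b|)
    (hLoewner : (Matrix.fromBlocks A₁ 0 0 A₂ -
        (Matrix.fromBlocks B₁ B₂ B₂ᵀ B₄ +
          Matrix.fromBlocks (a ^ 2 • C) ((a * b) • C) ((a * b) • C) (b ^ 2 • C))).PosSemidef) :
    (1 + C).det * (1 + (B₁ + B₂ + B₂ᵀ + B₄) + ((a + b) ^ 2 - 1) • C).det ≤
        (1 + A₁).det * (1 + A₂).det ∧
      (1 + C).det * (1 + (B₁ + B₂ + B₂ᵀ + B₄)).det ≤ (1 + A₁).det * (1 + A₂).det := by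
  have ha2 : 1 ≤ a ^ 2 := by nlinarith [sq_abs a, abs_nonneg a]
  have hb2 : 1 ≤ b ^ 2 := by nlinarith [sq_abs b, abs_nonneg b]
  have hab2 : 1 ≤ (a + b) ^ 2 := by nlinarith [sq_abs (a + b), abs_nonneg (a + b)]
  have hB1 : B₁.PosSemidef := block₁₁ hB
  have hB4 : B₄.PosSemidef := block₂₂ hB
  have hBbar : (B₁ + B₂ + B₂ᵀ + B₄).PosSemidef := sum_blocks_psd hB
  -- rewrite the Loewner hypothesis as a single fromBlocks matrix
  have eL : Matrix.fromBlocks A₁ 0 0 A₂ -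
      (Matrix.fromBlocks B₁ B₂ B₂ᵀ B₄ +
        Matrix.fromBlocks (a ^ 2 • C) ((a * b) • C) ((a * b) • C) (b ^ 2 • C)) =
      Matrix.fromBlocks (A₁ - (B₁ + a ^ 2 • C)) (-(B₂ + (a * b) • C))
        (-(B₂ᵀ + (a * b) • C)) (A₂ - (B₄ + b ^ 2 • C)) := by
    rw [fromBlocks_add, sub_eq_add_neg, fromBlocks_neg, fromBlocks_add]
    congr 1 <;> abel
  rw [eL] at hLoewner
  have h11 : (A₁ - (B₁ + a ^ 2 • C)).PosSemidef := block₁₁ hLoewner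
  have h22 : (A₂ - (B₄ + b ^ 2 • C)).PosSemidef := block₂₂ hLoewner
  have hsum0 := sum_blocks_psd hLoewner
  have hsum : (A₁ + A₂ - ((B₁ + B₂ + B₂ᵀ + B₄) + (a + b) ^ 2 • C)).PosSemidef := by
    have e : A₁ - (B₁ + a ^ 2 • C) + -(B₂ + (a * b) • C) + -(B₂ᵀ + (a * b) • C) +
        (A₂ - (B₄ + b ^ 2 • C)) =
        A₁ + A₂ - ((B₁ + B₂ + B₂ᵀ + B₄) + (a + b) ^ 2 • C) := by
      rw [show ((a + b) ^ 2 : ℝ) = a ^ 2 + (a * b + (a * b + b ^ 2)) from by ring,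
        add_smul, add_smul, add_smul]
      abel
    rwa [e] at hsum0
  -- A₁ - C and A₂ - C are PSD
  have hX : (A₁ - C).PosSemidef := by
    have e : A₁ - C = A₁ - (B₁ + a ^ 2 • C) + B₁ + (a ^ 2 - 1) • C := by
      rw [sub_smul, one_smul]; abel
    rw [e]
    exact (h11.add hB1).add (smul_psd hC (by linarith))
  have hY : (A₂ - C).PosSemidef := by
    have e : A₂ - C = A₂ - (B₄ + b ^ 2 • C) + B₄ + (b ^ 2 - 1) • C := by
      rw [sub_smul, one_smul]; abel
    rw [e]
    exact (h22.add hB4).add (smul_psd hC (by linarith))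
  have hD : (1 + C).PosDef := Matrix.PosDef.one.add_posSemidef hC
  -- supermodularity
  have hsup := supermod hD hX hY
  have e1 : 1 + C + (A₁ - C) = 1 + A₁ := by abel
  have e2 : 1 + C + (A₂ - C) = 1 + A₂ := by abel
  have e3 : 1 + C + (A₁ - C) + (A₂ - C) = 1 + (A₁ + A₂ - C) := by abel
  rw [e3] at hsup
  rw [show 1 + C + (A₁ - C) = 1 + A₁ from e1] at hsup
  rw [e2] at hsup
  -- the middle comparison
  have hmidPD : (1 + (B₁ + B₂ + B₂ᵀ + B₄) + ((a + b) ^ 2 - 1) • C).PosDef :=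
    (Matrix.PosDef.one.add_posSemidef hBbar).add_posSemidef (smul_psd hC (by linarith))
  have hmid : (1 + (B₁ + B₂ + B₂ᵀ + B₄) + ((a + b) ^ 2 - 1) • C).det ≤
      (1 + (A₁ + A₂ - C)).det := by
    have h := det_mono hmidPD hsum
    have e : 1 + (B₁ + B₂ + B₂ᵀ + B₄) + ((a + b) ^ 2 - 1) • C +
        (A₁ + A₂ - ((B₁ + B₂ + B₂ᵀ + B₄) + (a + b) ^ 2 • C)) = 1 + (A₁ + A₂ - C) := by
      rw [sub_smul, one_smul]; abel
    rwa [e] at h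
  have hCd : (0 : ℝ) ≤ (1 + C).det := hD.det_pos.le
  have first : (1 + C).det * (1 + (B₁ + B₂ + B₂ᵀ + B₄) + ((a + b) ^ 2 - 1) • C).det ≤
      (1 + A₁).det * (1 + A₂).det :=
    le_trans (mul_le_mul_of_nonneg_left hmid hCd) hsup
  refine ⟨first, ?_⟩
  have hmid2 : (1 + (B₁ + B₂ + B₂ᵀ + B₄)).det ≤
      (1 + (B₁ + B₂ + B₂ᵀ + B₄) + ((a + b) ^ 2 - 1) • C).det :=
    det_mono (Matrix.PosDef.one.add_posSemidef hBbar) (smul_psd hC (by linarith))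
  exact le_trans (mul_le_mul_of_nonneg_left hmid2 hCd) first
end

section
/- Let a, b, c, d : (0,∞) → [0,∞) be measurable functions satisfying a(t)·b(s) ≤ c(max(t,s))·d(min(t,s)) for all t, s > 0. Then (∫₀^∞ a)(∫₀^∞ b) ≤ (∫₀^∞ c)(∫₀^∞ d). -/
open MeasureTheory

/-- Key numeric lemma: if `x ≤ M`, `y ≤ M` and `x * y ≤ M * N`, then `x + y ≤ M + N`. -/
lemma four_functions_key {x y M N : ENNReal} (hx : x ≤ M) (hy : y ≤ M)
    (hxy : x * y ≤ M * N) : x + y ≤ M + N := by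
  rcases eq_or_ne M ⊤ with hM | hM
  · simp [hM]
  rcases eq_or_ne N ⊤ with hN | hN
  · simp [hN]
  rcases eq_or_ne M 0 with hM0 | hM0
  · subst hM0
    simp only [nonpos_iff_eq_zero] at hx hy
    simp [hx, hy]
  have hxt : x ≠ ⊤ := (hx.trans_lt (lt_top_iff_ne_top.2 hM)).ne
  have hyt : y ≠ ⊤ := (hy.trans_lt (lt_top_iff_ne_top.2 hM)).ne
  lift M to NNReal using hM
  lift N to NNReal using hN
  lift x to NNReal using hxt
  lift y to NNReal using hyt
  rw [← ENNReal.coe_mul, ← ENNReal.coe_mul, ENNReal.coe_le_coe] at hxy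
  rw [← ENNReal.coe_add, ← ENNReal.coe_add, ENNReal.coe_le_coe]
  rw [ENNReal.coe_le_coe] at hx hy
  have hM0' : 0 < (M : ℝ) := by
    have := NNReal.coe_ne_zero.2 (fun h => hM0 (by exact_mod_cast h))
    positivity
  rw [← NNReal.coe_le_coe] at hx hy hxy ⊢
  push_cast at hx hy hxy ⊢
  nlinarith [mul_nonneg (sub_nonneg.2 hx) (sub_nonneg.2 hy)]

/-- Multiplicative four functions theorem on `(0, ∞)` (Ahlswede–Daykin type):
if `a t * b s ≤ c (max t s) * d (min t s)` for all `t, s > 0`, then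
`(∫₀^∞ a) (∫₀^∞ b) ≤ (∫₀^∞ c) (∫₀^∞ d)`. -/
theorem four_functions_Ioi (a b c d : ℝ → ENNReal)
    (ha : Measurable a) (hb : Measurable b) (hc : Measurable c) (hd : Measurable d)
    (h : ∀ t s : ℝ, 0 < t → 0 < s → a t * b s ≤ c (max t s) * d (min t s)) :
    (∫⁻ t in Set.Ioi (0 : ℝ), a t) * (∫⁻ s in Set.Ioi (0 : ℝ), b s) ≤
      (∫⁻ p in Set.Ioi (0 : ℝ), c p) * (∫⁻ q in Set.Ioi (0 : ℝ), d q) := by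
  set μ : Measure ℝ := volume.restrict (Set.Ioi (0 : ℝ)) with hμdef
  set π : Measure (ℝ × ℝ) := μ.prod μ with hπdef
  -- swap invariance of π
  have swap_int : ∀ g : ℝ × ℝ → ENNReal, ∫⁻ p, g p.swap ∂π = ∫⁻ p, g p ∂π := fun g =>
    lintegral_prod_swap g
  -- the half plane
  set T : Set (ℝ × ℝ) := {p : ℝ × ℝ | p.1 ≤ p.2} with hTdef
  have hT : MeasurableSet T := measurableSet_le measurable_fst measurable_snd
  set T' : Set (ℝ × ℝ) := {p : ℝ × ℝ | p.2 ≤ p.1} with hT'def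
  have hT' : MeasurableSet T' := measurableSet_le measurable_snd measurable_fst
  -- functions
  set F : ℝ × ℝ → ENNReal := fun p => a p.1 * b p.2 with hFdef
  set G : ℝ × ℝ → ENNReal := fun p => c p.1 * d p.2 with hGdef
  have hFm : Measurable F := (ha.comp measurable_fst).mul (hb.comp measurable_snd)
  have hGm : Measurable G := (hc.comp measurable_fst).mul (hd.comp measurable_snd)
  -- a.e. membership in the positive quadrant
  have hπ_ae : ∀ᵐ p ∂π, 0 < p.1 ∧ 0 < p.2 := by
    have : π = (volume.prod volume).restrict (Set.Ioi (0:ℝ) ×ˢ Set.Ioi (0:ℝ)) := by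
      rw [hπdef, hμdef, Measure.prod_restrict]
    rw [this]
    filter_upwards [ae_restrict_mem (measurableSet_Ioi.prod measurableSet_Ioi)] with p hp
    exact ⟨hp.1, hp.2⟩
  -- diagonal is null
  have hdiag : π {p : ℝ × ℝ | p.1 = p.2} = 0 := by
    have hmeas : MeasurableSet {p : ℝ × ℝ | p.1 = p.2} :=
      measurableSet_eq_fun measurable_fst measurable_snd
    rw [hπdef, Measure.prod_apply hmeas]
    have : ∀ x : ℝ, μ (Prod.mk x ⁻¹' {p : ℝ × ℝ | p.1 = p.2}) = 0 := by
      intro x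
      have : Prod.mk x ⁻¹' {p : ℝ × ℝ | p.1 = p.2} = {x} := by
        ext y; simp [eq_comm]
      rw [this, hμdef]
      exact le_antisymm ((Measure.restrict_le_self _).trans_eq (measure_singleton x))
        zero_le
    simp [this]
  -- Step 1: product of integrals as double integral
  have h1 : (∫⁻ t in Set.Ioi (0 : ℝ), a t) * (∫⁻ s in Set.Ioi (0 : ℝ), b s)
      = ∫⁻ p, F p ∂π := (lintegral_prod_mul ha.aemeasurable hb.aemeasurable).symm
  have h2 : (∫⁻ p in Set.Ioi (0 : ℝ), c p) * (∫⁻ q in Set.Ioi (0 : ℝ), d q)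
      = ∫⁻ p, G p ∂π := (lintegral_prod_mul hc.aemeasurable hd.aemeasurable).symm
  rw [h1, h2]
  -- Step 2: bound ∫ F by integral over T of symmetrized F
  have hcover : ∀ p : ℝ × ℝ, F p ≤ T.indicator F p + T'.indicator F p := by
    intro p
    rcases le_total p.1 p.2 with hp | hp
    · calc F p = T.indicator F p := (Set.indicator_of_mem (show p ∈ T from hp) F).symm
        _ ≤ _ := le_self_add
    · calc F p = T'.indicator F p := (Set.indicator_of_mem (show p ∈ T' from hp) F).symm
        _ ≤ _ := le_add_self
  have hswapF : ∫⁻ p, T'.indicator F p ∂π = ∫⁻ p, T.indicator (fun q => F q.swap) p ∂π := by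
    rw [← swap_int (T.indicator (fun q => F q.swap))]
    refine lintegral_congr fun p => ?_
    by_cases hp : p ∈ T'
    · rw [Set.indicator_of_mem hp, Set.indicator_of_mem (show p.swap ∈ T from hp),
        Prod.swap_swap]
    · rw [Set.indicator_of_notMem hp, Set.indicator_of_notMem (show p.swap ∉ T from hp)]
  have hswapG : ∫⁻ p, T.indicator (fun q => G q.swap) p ∂π = ∫⁻ p, T'.indicator G p ∂π := by
    rw [← swap_int (T'.indicator G)]
    refine lintegral_congr fun p => ?_
    by_cases hp : p ∈ T
    · rw [Set.indicator_of_mem hp, Set.indicator_of_mem (show p.swap ∈ T' from hp)]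
    · rw [Set.indicator_of_notMem hp, Set.indicator_of_notMem (show p.swap ∉ T' from hp)]
  -- Step 3: pointwise inequality on T
  have hpoint : ∀ᵐ p ∂π,
      T.indicator F p + T.indicator (fun q => F q.swap) p
        ≤ T.indicator (fun q => G q.swap) p + T.indicator G p := by
    filter_upwards [hπ_ae] with p hp
    by_cases hpT : p ∈ T
    · simp only [Set.indicator_of_mem hpT]
      have hle : p.1 ≤ p.2 := hpT
      have hmax : max p.1 p.2 = p.2 := max_eq_right hle
      have hmin : min p.1 p.2 = p.1 := min_eq_left hle
      have hx : F p ≤ c p.2 * d p.1 := by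
        have := h p.1 p.2 hp.1 hp.2
        rwa [hmax, hmin] at this
      have hy : F p.swap ≤ c p.2 * d p.1 := by
        have := h p.2 p.1 hp.2 hp.1
        rwa [max_comm, min_comm, hmax, hmin] at this
      have hxy : F p * F p.swap ≤ (c p.2 * d p.1) * (c p.1 * d p.2) := by
        have h11 := h p.1 p.1 hp.1 hp.1
        have h22 := h p.2 p.2 hp.2 hp.2
        simp only [max_self, min_self] at h11 h22
        calc F p * F p.swap = (a p.1 * b p.1) * (a p.2 * b p.2) := by
              simp only [hFdef, Prod.fst_swap, Prod.snd_swap]; ring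
          _ ≤ (c p.1 * d p.1) * (c p.2 * d p.2) := mul_le_mul' h11 h22
          _ = (c p.2 * d p.1) * (c p.1 * d p.2) := by ring
      have := four_functions_key hx hy hxy
      calc F p + F p.swap ≤ (c p.2 * d p.1) + (c p.1 * d p.2) := this
        _ = G p.swap + G p := by simp only [hGdef, Prod.fst_swap, Prod.snd_swap]
    · simp [Set.indicator_of_notMem hpT]
  -- Step 4: recombine on the G side
  have hGcomb : ∫⁻ p, T.indicator G p ∂π + ∫⁻ p, T'.indicator G p ∂π = ∫⁻ p, G p ∂π := by
    rw [← lintegral_add_left (hGm.indicator hT)]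
    have : ∀ᵐ p ∂π, T.indicator G p + T'.indicator G p = G p := by
      have hd0 : ∀ᵐ p ∂π, p.1 ≠ p.2 := by
        rw [ae_iff]
        simpa using hdiag
      filter_upwards [hd0] with p hp
      rcases lt_or_gt_of_ne hp with hlt | hlt
      · rw [Set.indicator_of_mem (show p ∈ T from hlt.le),
          Set.indicator_of_notMem (show p ∉ T' from not_le.2 hlt), add_zero]
      · rw [Set.indicator_of_notMem (show p ∉ T from not_le.2 hlt),
          Set.indicator_of_mem (show p ∈ T' from hlt.le), zero_add]
    exact lintegral_congr_ae this
  -- put everything together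
  calc ∫⁻ p, F p ∂π ≤ ∫⁻ p, (T.indicator F p + T'.indicator F p) ∂π :=
        lintegral_mono hcover
    _ = ∫⁻ p, T.indicator F p ∂π + ∫⁻ p, T'.indicator F p ∂π :=
        lintegral_add_left (hFm.indicator hT) _
    _ = ∫⁻ p, T.indicator F p ∂π + ∫⁻ p, T.indicator (fun q => F q.swap) p ∂π := by
        rw [hswapF]
    _ = ∫⁻ p, (T.indicator F p + T.indicator (fun q => F q.swap) p) ∂π :=
        (lintegral_add_left (hFm.indicator hT) _).symm
    _ ≤ ∫⁻ p, (T.indicator (fun q => G q.swap) p + T.indicator G p) ∂π :=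
        lintegral_mono_ae hpoint
    _ = ∫⁻ p, T.indicator (fun q => G q.swap) p ∂π + ∫⁻ p, T.indicator G p ∂π :=
        lintegral_add_left (((hGm.comp measurable_swap).indicator hT)) _
    _ = ∫⁻ p, T'.indicator G p ∂π + ∫⁻ p, T.indicator G p ∂π := by rw [hswapG]
    _ = ∫⁻ p, G p ∂π := by rw [add_comm, hGcomb]
end

section
/- For n = 1, there is no constant C₁ > 0, C₂, C₃ ≥ 1 such that γ(K∩L)·γ(C₁(K+L)) ≤ C₂·γ(C₃K)·γ(C₃L) holds for all origin-symmetric convex sets K, L ⊂ ℝ²: explicitly, taking K = {|x₁| ≤ a} and L = U_θ(K) a rotation of K by angle θ > 0, one has K + U_θ(K) = ℝ², while γ(K ∩ U_θ(K)) → γ(K) as θ → 0, so for a small enough the inequality fails for small θ. -/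
open MeasureTheory Set Pointwise
open scoped ENNReal

/-- The standard Gaussian probability measure on `ℝ²`. -/
noncomputable def stdGaussian2 : Measure (EuclideanSpace ℝ (Fin 2)) :=
  volume.withDensity fun x =>
    ENNReal.ofReal ((2 * Real.pi) ^ (-(2 : ℝ) / 2) * Real.exp (-‖x‖ ^ 2 / 2))

noncomputable def g1 (t : ℝ) : ℝ≥0∞ :=
  ENNReal.ofReal ((Real.sqrt (2 * Real.pi))⁻¹ * Real.exp (-t ^ 2 / 2))

lemma g1_meas : Measurable g1 := by
  apply Measurable.ennreal_ofReal; fun_prop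

noncomputable def eqv : EuclideanSpace ℝ (Fin 2) ≃ᵐ ℝ × ℝ :=
  (MeasurableEquiv.toLp 2 (Fin 2 → ℝ)).symm.trans (MeasurableEquiv.finTwoArrow)

lemma eqv_apply (x : EuclideanSpace ℝ (Fin 2)) : eqv x = (x 0, x 1) := rfl

lemma eqv_mp : MeasurePreserving eqv volume volume :=
  (EuclideanSpace.volume_preserving_symm_measurableEquiv_toLp (Fin 2)).trans
    (volume_preserving_finTwoArrow ℝ)

lemma density_eq (x : EuclideanSpace ℝ (Fin 2)) :
    ENNReal.ofReal ((2 * Real.pi) ^ (-(2 : ℝ) / 2) * Real.exp (-‖x‖ ^ 2 / 2)) =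
      g1 (x 0) * g1 (x 1) := by
  have hπ : (0:ℝ) < 2 * Real.pi := by positivity
  have hnorm : ‖x‖ ^ 2 = (x 0) ^ 2 + (x 1) ^ 2 := by
    rw [EuclideanSpace.norm_eq, Real.sq_sqrt (by positivity)]
    simp [Fin.sum_univ_two, Real.norm_eq_abs, sq_abs]
  have hpow : (2 * Real.pi) ^ (-(2 : ℝ) / 2) =
      (Real.sqrt (2 * Real.pi))⁻¹ * (Real.sqrt (2 * Real.pi))⁻¹ := by
    rw [← mul_inv, Real.mul_self_sqrt hπ.le]
    rw [show (-(2:ℝ)/2) = (-1 : ℝ) by norm_num, Real.rpow_neg_one]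
  rw [g1, g1, ← ENNReal.ofReal_mul (by positivity)]
  congr 1
  rw [hpow, hnorm]
  rw [show -((x 0) ^ 2 + (x 1) ^ 2) / 2 = (-(x 0)^2/2) + (-(x 1)^2/2) by ring, Real.exp_add]
  ring

lemma transfer (T : Set (ℝ × ℝ)) (hT : MeasurableSet T) :
    stdGaussian2 {x : EuclideanSpace ℝ (Fin 2) | (x 0, x 1) ∈ T} =
      ∫⁻ p in T, g1 p.1 * g1 p.2 := by
  have hmeas : Measurable fun x : EuclideanSpace ℝ (Fin 2) => (x 0, x 1) :=
    eqv.measurable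
  have hS : MeasurableSet {x : EuclideanSpace ℝ (Fin 2) | (x 0, x 1) ∈ T} := hmeas hT
  have hfT : Measurable fun p : ℝ × ℝ => g1 p.1 * g1 p.2 :=
    (g1_meas.comp measurable_fst).mul (g1_meas.comp measurable_snd)
  rw [stdGaussian2, withDensity_apply _ hS, ← lintegral_indicator hS _,
    ← lintegral_indicator hT _]
  have key : ∀ x : EuclideanSpace ℝ (Fin 2),
      ({x : EuclideanSpace ℝ (Fin 2) | (x 0, x 1) ∈ T}.indicator
        (fun x => ENNReal.ofReal ((2 * Real.pi) ^ (-(2 : ℝ) / 2) * Real.exp (-‖x‖ ^ 2 / 2))) x)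
        = (T.indicator (fun p => g1 p.1 * g1 p.2)) (eqv x) := by
    intro x
    rw [eqv_apply]
    by_cases h : (x 0, x 1) ∈ T
    · rw [Set.indicator_of_mem h,
        Set.indicator_of_mem (show x ∈ {y : EuclideanSpace ℝ (Fin 2) | (y 0, y 1) ∈ T} from h)]
      exact density_eq x
    · rw [Set.indicator_of_notMem h,
        Set.indicator_of_notMem (show x ∉ {y : EuclideanSpace ℝ (Fin 2) | (y 0, y 1) ∈ T} from h)]
  simp_rw [key]
  exact eqv_mp.lintegral_comp (hfT.indicator hT)

noncomputable def IK (b : ℝ) : ℝ≥0∞ := ∫⁻ t in Icc (-b) b, g1 t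

noncomputable def IΩ : ℝ≥0∞ := ∫⁻ t, g1 t

lemma IΩ_eq_one : IΩ = 1 := by
  have h2 : (0:ℝ) < (1:ℝ)/2 := by norm_num
  have h0 : (fun t : ℝ => Real.exp (-t ^ 2 / 2)) = fun t : ℝ => Real.exp (-((1:ℝ)/2) * t ^ 2) := by
    funext t; congr 1; ring
  have hexp : Integrable (fun t : ℝ => Real.exp (-t ^ 2 / 2)) := by
    rw [h0]; exact integrable_exp_neg_mul_sq h2
  have hint : Integrable (fun t : ℝ => (Real.sqrt (2 * Real.pi))⁻¹ * Real.exp (-t ^ 2 / 2)) :=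
    hexp.const_mul _
  rw [IΩ]; simp only [g1]
  rw [← ofReal_integral_eq_lintegral_ofReal hint
    (Filter.Eventually.of_forall fun t => by positivity)]
  rw [MeasureTheory.integral_const_mul]
  have hI : ∫ t : ℝ, Real.exp (-t ^ 2 / 2) = Real.sqrt (2 * Real.pi) := by
    rw [h0, integral_gaussian]
    congr 1; ring
  rw [hI, inv_mul_cancel₀ (by positivity), ENNReal.ofReal_one]

lemma rect_measure (A B : Set ℝ) (hA : MeasurableSet A) (hB : MeasurableSet B) :
    stdGaussian2 {x : EuclideanSpace ℝ (Fin 2) | x 0 ∈ A ∧ x 1 ∈ B} =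
      (∫⁻ t in A, g1 t) * (∫⁻ t in B, g1 t) := by
  have h : {x : EuclideanSpace ℝ (Fin 2) | x 0 ∈ A ∧ x 1 ∈ B}
      = {x : EuclideanSpace ℝ (Fin 2) | (x 0, x 1) ∈ A ×ˢ B} := rfl
  rw [h, transfer _ (hA.prod hB)]
  rw [show (volume : Measure (ℝ × ℝ)).restrict (A ×ˢ B)
      = (volume.restrict A).prod (volume.restrict B) by
    rw [Measure.prod_restrict, ← Measure.volume_eq_prod]]
  exact lintegral_prod_mul g1_meas.aemeasurable g1_meas.aemeasurable

lemma sqrt_two_pi_le_three : Real.sqrt (2 * Real.pi) ≤ 3 := by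
  rw [show (3:ℝ) = Real.sqrt 9 by rw [show (9:ℝ) = 3 ^ 2 by norm_num, Real.sqrt_sq]; norm_num]
  exact Real.sqrt_le_sqrt (by nlinarith [Real.pi_lt_d2])

lemma two_le_sqrt_two_pi : (2:ℝ) ≤ Real.sqrt (2 * Real.pi) := by
  have h4 : Real.sqrt 4 ≤ Real.sqrt (2 * Real.pi) :=
    Real.sqrt_le_sqrt (by nlinarith [Real.pi_gt_three])
  have h : Real.sqrt 4 = 2 := by
    rw [show (4:ℝ) = 2 ^ 2 by norm_num, Real.sqrt_sq (by norm_num : (0:ℝ) ≤ 2)]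
  linarith

lemma g1_le (t : ℝ) : g1 t ≤ ENNReal.ofReal (1/2) := by
  apply ENNReal.ofReal_le_ofReal
  have h1 : Real.exp (-t ^ 2 / 2) ≤ 1 := Real.exp_le_one_iff.2 (by nlinarith [sq_nonneg t])
  have h2 : (Real.sqrt (2 * Real.pi))⁻¹ ≤ 1/2 := by
    have := inv_anti₀ (by norm_num : (0:ℝ) < 2) two_le_sqrt_two_pi
    rw [show ((2:ℝ))⁻¹ = 1/2 by norm_num] at this
    exact this
  calc (Real.sqrt (2 * Real.pi))⁻¹ * Real.exp (-t ^ 2 / 2)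
      ≤ (Real.sqrt (2 * Real.pi))⁻¹ * 1 := by gcongr
    _ ≤ 1/2 := by rwa [mul_one]

lemma g1_ge {t : ℝ} (ht : |t| ≤ 1) : ENNReal.ofReal (1/6) ≤ g1 t := by
  apply ENNReal.ofReal_le_ofReal
  have he : Real.exp ((1:ℝ)/2) ≤ 2 := by
    have hsq : Real.exp ((1:ℝ)/2) * Real.exp ((1:ℝ)/2) = Real.exp 1 := by
      rw [← Real.exp_add]; norm_num
    nlinarith [Real.exp_one_lt_d9, Real.exp_pos ((1:ℝ)/2)]
  have hexp : (1/2 : ℝ) ≤ Real.exp (-t ^ 2 / 2) := by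
    have h1 : Real.exp (-((1:ℝ)/2)) ≤ Real.exp (-t ^ 2 / 2) := by
      apply Real.exp_le_exp.2
      nlinarith [abs_nonneg t, sq_abs t, abs_le.1 ht]
    have h2 : (1/2 : ℝ) ≤ Real.exp (-((1:ℝ)/2)) := by
      rw [Real.exp_neg]
      have := inv_anti₀ (Real.exp_pos ((1:ℝ)/2)) he
      rw [show ((2:ℝ))⁻¹ = 1/2 by norm_num] at this
      exact this
    linarith
  have hs : (1/3 : ℝ) ≤ (Real.sqrt (2 * Real.pi))⁻¹ := by
    have := inv_anti₀ (by positivity : (0:ℝ) < Real.sqrt (2 * Real.pi)) sqrt_two_pi_le_three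
    rw [show ((3:ℝ))⁻¹ = 1/3 by norm_num] at this
    exact this
  calc (1/6 : ℝ) = (1/3) * (1/2) := by norm_num
    _ ≤ (Real.sqrt (2 * Real.pi))⁻¹ * Real.exp (-t ^ 2 / 2) :=
        mul_le_mul hs hexp (by norm_num) (by positivity)

lemma interval_le (u v : ℝ) : ∫⁻ t in Icc u v, g1 t ≤ ENNReal.ofReal ((v - u)/2) := by
  calc ∫⁻ t in Icc u v, g1 t ≤ ∫⁻ _ in Icc u v, ENNReal.ofReal (1/2) :=
        lintegral_mono fun t => g1_le t
    _ = ENNReal.ofReal (1/2) * volume (Icc u v) := by rw [setLIntegral_const]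
    _ = ENNReal.ofReal (1/2) * ENNReal.ofReal (v - u) := by rw [Real.volume_Icc]
    _ = ENNReal.ofReal ((v - u)/2) := by
        rw [← ENNReal.ofReal_mul (by norm_num)]; congr 1; ring

lemma IK_le {b : ℝ} : IK b ≤ ENNReal.ofReal b := by
  refine le_trans (interval_le _ _) (ENNReal.ofReal_le_ofReal ?_)
  ring_nf
  linarith [le_refl b]

lemma IK_ge {b : ℝ} (hb0 : 0 ≤ b) (hb1 : b ≤ 1) : ENNReal.ofReal (b/3) ≤ IK b := by
  have h : ∫⁻ _ in Icc (-b) b, ENNReal.ofReal (1/6) ≤ IK b := by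
    apply setLIntegral_mono g1_meas
    intro t ht
    exact g1_ge (by rw [abs_le]; exact ⟨le_trans (by linarith) ht.1, le_trans ht.2 hb1⟩)
  refine le_trans ?_ h
  rw [setLIntegral_const, Real.volume_Icc, ← ENNReal.ofReal_mul (by norm_num)]
  apply ENNReal.ofReal_le_ofReal
  nlinarith

lemma slab_le (s b : ℝ) :
    stdGaussian2 {x : EuclideanSpace ℝ (Fin 2) | |x 0 + s * x 1| ≤ b} ≤
      ENNReal.ofReal b * IΩ := by
  set T : Set (ℝ × ℝ) := {p | |p.1 + s * p.2| ≤ b} with hTdef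
  have hT : MeasurableSet T :=
    measurableSet_le ((measurable_fst.add (measurable_snd.const_mul s)).abs) measurable_const
  have hfT : Measurable fun p : ℝ × ℝ => g1 p.1 * g1 p.2 :=
    (g1_meas.comp measurable_fst).mul (g1_meas.comp measurable_snd)
  have h : {x : EuclideanSpace ℝ (Fin 2) | |x 0 + s * x 1| ≤ b}
      = {x : EuclideanSpace ℝ (Fin 2) | (x 0, x 1) ∈ T} := rfl
  rw [h, transfer _ hT, ← lintegral_indicator hT _, Measure.volume_eq_prod,
    lintegral_prod_symm' _ (hfT.indicator hT)]
  have inner : ∀ q : ℝ,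
      (∫⁻ p : ℝ, T.indicator (fun p => g1 p.1 * g1 p.2) (p, q)) ≤ ENNReal.ofReal b * g1 q := by
    intro q
    have hsec : ∀ p : ℝ, T.indicator (fun p => g1 p.1 * g1 p.2) (p, q)
        = (Icc (-b - s*q) (b - s*q)).indicator (fun p => g1 p * g1 q) p := by
      intro p
      have hiff : ((p, q) ∈ T) ↔ p ∈ Icc (-b - s*q) (b - s*q) := by
        simp only [hTdef, mem_setOf_eq, mem_Icc, abs_le]
        constructor <;> intro hp <;> exact ⟨by linarith [hp.1], by linarith [hp.2]⟩
      simp only [Set.indicator_apply, hiff]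
    simp_rw [hsec]
    rw [lintegral_indicator measurableSet_Icc _,
      lintegral_mul_const (g1 q) g1_meas]
    have h1 : ∫⁻ p in Icc (-b - s*q) (b - s*q), g1 p ≤ ENNReal.ofReal b := by
      refine le_trans (interval_le _ _) (ENNReal.ofReal_le_ofReal ?_)
      ring_nf
      linarith [le_refl b]
    exact mul_le_mul_left h1 _
  calc (∫⁻ q : ℝ, ∫⁻ p : ℝ, T.indicator (fun p => g1 p.1 * g1 p.2) (p, q))
      ≤ ∫⁻ q : ℝ, ENNReal.ofReal b * g1 q := lintegral_mono inner
    _ = ENNReal.ofReal b * IΩ := lintegral_const_mul _ g1_meas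

lemma convex_abs_le {f : EuclideanSpace ℝ (Fin 2) → ℝ} (hf : IsLinearMap ℝ f) (r : ℝ) :
    Convex ℝ {x | |f x| ≤ r} := by
  have h : {x : EuclideanSpace ℝ (Fin 2) | |f x| ≤ r}
      = {x | -r ≤ f x} ∩ {x | f x ≤ r} := by
    ext x; simp only [mem_setOf_eq, mem_inter_iff, abs_le]
  rw [h]
  exact (convex_halfSpace_ge hf (-r)).inter (convex_halfSpace_le hf r)

/-- No reverse Gaussian Rogers–Shephard inequality: there are no constants `C₁ > 0`,
`C₂, C₃ ≥ 1` such that `γ(K ∩ L) γ(C₁(K + L)) ≤ C₂ γ(C₃ K) γ(C₃ L)` for all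
origin-symmetric convex sets `K, L ⊂ ℝ²`. -/
theorem no_reverse_gaussian_rogers_shephard :
    ¬ ∃ C₁ C₂ C₃ : ℝ, 0 < C₁ ∧ 1 ≤ C₂ ∧ 1 ≤ C₃ ∧
      ∀ K L : Set (EuclideanSpace ℝ (Fin 2)),
        Convex ℝ K → Convex ℝ L → K = -K → L = -L →
          stdGaussian2 (K ∩ L) * stdGaussian2 (C₁ • (K + L)) ≤
            ENNReal.ofReal C₂ * (stdGaussian2 (C₃ • K) * stdGaussian2 (C₃ • L)) := by
  rintro ⟨C₁, C₂, C₃, hC₁, hC₂, hC₃, H⟩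
  have hC₂0 : (0:ℝ) < C₂ := lt_of_lt_of_le zero_lt_one hC₂
  have hC₃0 : (0:ℝ) < C₃ := lt_of_lt_of_le zero_lt_one hC₃
  set a : ℝ := min 1 (1/(36*C₂*C₃^2)) with ha_def
  have ha0 : 0 < a := lt_min zero_lt_one (by positivity)
  have ha1 : a ≤ 1 := min_le_left _ _
  have ha2 : a ≤ 1/(36*C₂*C₃^2) := min_le_right _ _
  set K : Set (EuclideanSpace ℝ (Fin 2)) := {x | |x 0| ≤ a} with hKdef
  set L : Set (EuclideanSpace ℝ (Fin 2)) := {x | |x 0 + (a/2) * x 1| ≤ a} with hLdef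
  have lin1 : IsLinearMap ℝ (fun x : EuclideanSpace ℝ (Fin 2) => x 0) :=
    ⟨fun x y => rfl, fun c x => rfl⟩
  have lin2 : IsLinearMap ℝ (fun x : EuclideanSpace ℝ (Fin 2) => x 0 + (a/2) * x 1) :=
    ⟨fun x y => by show (x 0 + y 0) + (a/2) * (x 1 + y 1) = _; ring,
     fun c x => by show (c * x 0) + (a/2) * (c * x 1) = c * _; ring⟩
  have hKconv : Convex ℝ K := convex_abs_le lin1 a
  have hLconv : Convex ℝ L := convex_abs_le lin2 a
  have hneg0 : ∀ x : EuclideanSpace ℝ (Fin 2), (-x) 0 = -(x 0) := fun _ => rfl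
  have hneg1 : ∀ x : EuclideanSpace ℝ (Fin 2), (-x) 1 = -(x 1) := fun _ => rfl
  have hKsym : K = -K := by
    ext x; simp only [hKdef, Set.mem_neg, mem_setOf_eq, hneg0, abs_neg]
  have hLsym : L = -L := by
    ext x
    simp only [hLdef, Set.mem_neg, mem_setOf_eq, hneg0, hneg1]
    rw [show -(x 0) + a/2 * -(x 1) = -(x 0 + a/2 * x 1) by ring, abs_neg]
  have hKL : K + L = univ := by
    apply eq_univ_of_forall
    intro z
    have hs0 : (a/2) ≠ 0 := by positivity
    set y : EuclideanSpace ℝ (Fin 2) :=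
      (WithLp.equiv 2 (Fin 2 → ℝ)).symm ![z 0, -(z 0)/(a/2)] with hy
    have hy0 : y 0 = z 0 := rfl
    have hy1 : y 1 = -(z 0)/(a/2) := rfl
    rw [Set.mem_add]
    refine ⟨z - y, ?_, y, ?_, by abel⟩
    · show |(z - y) 0| ≤ a
      rw [show (z - y) 0 = z 0 - y 0 from rfl, hy0, sub_self, abs_zero]
      exact ha0.le
    · show |y 0 + (a/2) * y 1| ≤ a
      rw [hy0, hy1, mul_comm, div_mul_cancel₀ _ hs0]
      simp [ha0.le]
  have hK3 : C₃ • K = {x : EuclideanSpace ℝ (Fin 2) | |x 0| ≤ C₃ * a} := by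
    ext x
    rw [mem_smul_set_iff_inv_smul_mem₀ (ne_of_gt hC₃0)]
    simp only [hKdef, mem_setOf_eq]
    rw [show (C₃⁻¹ • x) 0 = C₃⁻¹ * x 0 from rfl, abs_mul, abs_inv, abs_of_pos hC₃0,
      inv_mul_le_iff₀ hC₃0]
  have hL3 : C₃ • L = {x : EuclideanSpace ℝ (Fin 2) | |x 0 + (a/2) * x 1| ≤ C₃ * a} := by
    ext x
    rw [mem_smul_set_iff_inv_smul_mem₀ (ne_of_gt hC₃0)]
    simp only [hLdef, mem_setOf_eq]
    rw [show (C₃⁻¹ • x) 0 + (a/2) * (C₃⁻¹ • x) 1 = C₃⁻¹ * (x 0 + (a/2) * x 1) by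
        show C₃⁻¹ * x 0 + (a/2) * (C₃⁻¹ * x 1) = _; ring,
      abs_mul, abs_inv, abs_of_pos hC₃0, inv_mul_le_iff₀ hC₃0]
  have huniv : stdGaussian2 univ = 1 := by
    have h : (univ : Set (EuclideanSpace ℝ (Fin 2)))
        = {x : EuclideanSpace ℝ (Fin 2) | x 0 ∈ (univ : Set ℝ) ∧ x 1 ∈ (univ : Set ℝ)} := by
      ext x; simp
    rw [h, rect_measure _ _ MeasurableSet.univ MeasurableSet.univ, Measure.restrict_univ]
    show IΩ * IΩ = 1
    rw [IΩ_eq_one, mul_one]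
  have hKLsmul : stdGaussian2 (C₁ • (K + L)) = 1 := by
    rw [hKL, smul_set_univ₀ (ne_of_gt hC₁), huniv]
  have hKml : ENNReal.ofReal (a/18) ≤ stdGaussian2 (K ∩ L) := by
    have hsub : {x : EuclideanSpace ℝ (Fin 2) |
        x 0 ∈ Icc (-(a/2)) (a/2) ∧ x 1 ∈ Icc (-(1:ℝ)) 1} ⊆ K ∩ L := by
      rintro x ⟨hx0, hx1⟩
      rw [mem_Icc] at hx0 hx1
      constructor
      · show |x 0| ≤ a
        rw [abs_le]; exact ⟨by linarith [hx0.1], by linarith [hx0.2]⟩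
      · show |x 0 + (a/2) * x 1| ≤ a
        have h1 : |x 0| ≤ a/2 := abs_le.2 ⟨hx0.1, hx0.2⟩
        have h2 : |x 1| ≤ 1 := abs_le.2 hx1
        calc |x 0 + (a/2) * x 1| ≤ |x 0| + |(a/2) * x 1| := abs_add_le _ _
          _ = |x 0| + (a/2) * |x 1| := by
              rw [abs_mul, abs_of_nonneg (by positivity : (0:ℝ) ≤ a/2)]
          _ ≤ a/2 + (a/2) * 1 :=
              add_le_add h1 (mul_le_mul_of_nonneg_left h2 (by positivity))
          _ = a := by ring
    refine le_trans ?_ (measure_mono hsub)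
    rw [rect_measure _ _ measurableSet_Icc measurableSet_Icc]
    have e1 : (∫⁻ t in Icc (-(a/2)) (a/2), g1 t) = IK (a/2) := rfl
    have e2 : (∫⁻ t in Icc (-(1:ℝ)) 1, g1 t) = IK 1 := rfl
    rw [e1, e2]
    calc ENNReal.ofReal (a/18) = ENNReal.ofReal ((a/2)/3) * ENNReal.ofReal ((1:ℝ)/3) := by
          rw [← ENNReal.ofReal_mul (by positivity)]; congr 1; ring
      _ ≤ IK (a/2) * IK 1 :=
          mul_le_mul' (IK_ge (by positivity) (by linarith)) (IK_ge (by norm_num) le_rfl)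
  have hK3m : stdGaussian2 (C₃ • K) ≤ ENNReal.ofReal (C₃ * a) := by
    rw [hK3]
    have h : {x : EuclideanSpace ℝ (Fin 2) | |x 0| ≤ C₃ * a}
        = {x : EuclideanSpace ℝ (Fin 2) |
            x 0 ∈ Icc (-(C₃*a)) (C₃*a) ∧ x 1 ∈ (univ : Set ℝ)} := by
      ext x; simp [abs_le, mem_Icc]
    rw [h, rect_measure _ _ measurableSet_Icc MeasurableSet.univ, Measure.restrict_univ]
    have e1 : (∫⁻ t in Icc (-(C₃*a)) (C₃*a), g1 t) = IK (C₃*a) := rfl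
    have e2 : (∫⁻ t : ℝ, g1 t) = IΩ := rfl
    rw [e1, e2, IΩ_eq_one, mul_one]
    exact IK_le
  have hL3m : stdGaussian2 (C₃ • L) ≤ ENNReal.ofReal (C₃ * a) := by
    rw [hL3]
    have h := slab_le (a/2) (C₃*a)
    rw [IΩ_eq_one, mul_one] at h
    exact h
  have H' := H K L hKconv hLconv hKsym hLsym
  rw [hKLsmul, mul_one] at H'
  have hchain : ENNReal.ofReal (a/18) ≤ ENNReal.ofReal (C₂ * (C₃*a * (C₃*a))) := by
    refine le_trans hKml (le_trans H' ?_)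
    rw [ENNReal.ofReal_mul hC₂0.le, ENNReal.ofReal_mul (by positivity : (0:ℝ) ≤ C₃*a)]
    exact mul_le_mul' le_rfl (mul_le_mul' hK3m hL3m)
  have hreal : a/18 ≤ C₂ * (C₃*a * (C₃*a)) :=
    (ENNReal.ofReal_le_ofReal_iff (by positivity)).1 hchain
  have h36 : a * (36*C₂*C₃^2) ≤ 1 := by
    rw [← le_div_iff₀ (by positivity)]
    exact ha2
  nlinarith [mul_le_mul_of_nonneg_right h36 ha0.le, ha0, hreal]
end
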